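/- arXiv:2204.13328 — 6 statements merged into one kernel-verified Lean document; each statement's English description precedes it below -/
import Mathlib

section
/- For any measurable function u : ℝ^N → ℝ, any Young function Φ (continuous, convex, Φ(0)=0), and any t > 0, the set E_t = {(x,y) ∈ ℝ^{2N} : x ≠ y, Φ(|u(x)-u(y)|) ≥ Φ(t)·|x-y|^N} satisfies Φ(t)·|E_t|_{2N} ≤ 2·ω_N·∫_{ℝ^N} Φ(2|u(x)|) dx, where ω_N is the volume of the unit ball in ℝ^N and |·|_{2N} denotes Lebesgue measure on ℝ^{2N}. -/
open MeasureTheory Metric Set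

theorem stmt0 (N : ℕ) (hN : 0 < N) (Φ : ℝ → ℝ)
    (hΦc : ContinuousOn Φ (Ici 0)) (hΦconv : ConvexOn ℝ (Ici 0) Φ)
    (hΦ0 : Φ 0 = 0) (hΦnn : ∀ s, 0 ≤ s → 0 ≤ Φ s)
    (u : EuclideanSpace ℝ (Fin N) → ℝ) (hu : Measurable u)
    (t : ℝ) (ht : 0 < t) :
    ENNReal.ofReal (Φ t) *
      volume {p : EuclideanSpace ℝ (Fin N) × EuclideanSpace ℝ (Fin N) |
        p.1 ≠ p.2 ∧ Φ t * dist p.1 p.2 ^ N ≤ Φ (|u p.1 - u p.2|)} ≤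
    2 * volume (ball (0 : EuclideanSpace ℝ (Fin N)) 1) *
      ∫⁻ x, ENNReal.ofReal (Φ (2 * |u x|)) := by
  by_cases hΦt : Φ t ≤ 0
  · have h0 : ENNReal.ofReal (Φ t) = 0 := ENNReal.ofReal_eq_zero.2 hΦt
    simp [h0]
  push_neg at hΦt
  set ωN := volume (ball (0 : (EuclideanSpace ℝ (Fin N))) 1) with hωN
  -- a continuous extension of Φ
  set ψ : ℝ → ℝ := fun s => Φ (max s 0) with hψdef
  have hψc : Continuous ψ :=
    hΦc.comp_continuous (continuous_id.max continuous_const) fun s => mem_Ici.2 (le_max_right _ _)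
  have hψeq : ∀ s, 0 ≤ s → ψ s = Φ s := fun s hs => by simp [hψdef, max_eq_left hs]
  -- monotonicity of Φ on [0, ∞)
  have hmono : ∀ a b : ℝ, 0 ≤ a → a ≤ b → Φ a ≤ Φ b := by
    intro a b ha hab
    have hb : 0 ≤ b := ha.trans hab
    rcases eq_or_lt_of_le hb with hb0 | hb0
    · have : a = 0 := le_antisymm (hab.trans hb0.symm.le) ha
      simp [this, ← hb0]
    · have hl : 0 ≤ a / b := div_nonneg ha hb0.le
      have hl1 : a / b ≤ 1 := (div_le_one hb0).2 hab
      have key := hΦconv.2 (mem_Ici.2 le_rfl) (mem_Ici.2 hb)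
        (by linarith : (0:ℝ) ≤ 1 - a / b) hl (by ring)
      have heq : (1 - a / b) • (0:ℝ) + (a / b) • b = a := by
        rw [smul_eq_mul, smul_eq_mul, mul_zero, zero_add, div_mul_cancel₀ a hb0.ne']
      rw [heq] at key
      have : Φ a ≤ (a / b) * Φ b := by
        simpa [hΦ0, smul_eq_mul] using key
      nlinarith [hΦnn b hb]
  -- key pointwise bound
  have hg : Measurable fun x : (EuclideanSpace ℝ (Fin N)) => ψ (2 * |u x|) :=
    hψc.measurable.comp ((measurable_const.mul hu.abs))
  set g : (EuclideanSpace ℝ (Fin N)) → ℝ := fun x => ψ (2 * |u x|) with hgdef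
  have hgnn : ∀ x, 0 ≤ g x := fun x => by
    rw [hgdef]; dsimp only
    rw [hψeq _ (by positivity)]
    exact hΦnn _ (by positivity)
  have hkey : ∀ x y : (EuclideanSpace ℝ (Fin N)), Φ (|u x - u y|) ≤ (1/2) * g x + (1/2) * g y := by
    intro x y
    have h1 : Φ (|u x - u y|) ≤ Φ (|u x| + |u y|) :=
      hmono _ _ (abs_nonneg _) (abs_sub _ _)
    have h2 := hΦconv.2 (mem_Ici.2 (by positivity : (0:ℝ) ≤ 2 * |u x|))
      (mem_Ici.2 (by positivity : (0:ℝ) ≤ 2 * |u y|))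
      (by norm_num : (0:ℝ) ≤ 1/2) (by norm_num : (0:ℝ) ≤ 1/2) (by norm_num)
    have heq : (1/2 : ℝ) • (2 * |u x|) + (1/2 : ℝ) • (2 * |u y|) = |u x| + |u y| := by
      simp only [smul_eq_mul]; ring
    rw [heq] at h2
    have e1 : g x = Φ (2 * |u x|) := hψeq _ (by positivity)
    have e2 : g y = Φ (2 * |u y|) := hψeq _ (by positivity)
    rw [e1, e2]
    simpa [smul_eq_mul] using h1.trans h2
  -- the two halves
  set A : Set ((EuclideanSpace ℝ (Fin N)) × (EuclideanSpace ℝ (Fin N))) := {p | Φ t * dist p.1 p.2 ^ N ≤ g p.1} with hAdef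
  set B : Set ((EuclideanSpace ℝ (Fin N)) × (EuclideanSpace ℝ (Fin N))) := {p | Φ t * dist p.1 p.2 ^ N ≤ g p.2} with hBdef
  have hEsub : {p : (EuclideanSpace ℝ (Fin N)) × (EuclideanSpace ℝ (Fin N)) | p.1 ≠ p.2 ∧ Φ t * dist p.1 p.2 ^ N ≤ Φ (|u p.1 - u p.2|)}
      ⊆ A ∪ B := by
    rintro ⟨x, y⟩ ⟨-, hle⟩
    have h := hle.trans (hkey x y)
    rcases le_total (g x) (g y) with h' | h'
    · right; show Φ t * dist x y ^ N ≤ g y; linarith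
    · left; show Φ t * dist x y ^ N ≤ g x; linarith
  have hdistm : Measurable fun p : (EuclideanSpace ℝ (Fin N)) × (EuclideanSpace ℝ (Fin N)) => Φ t * dist p.1 p.2 ^ N :=
    (measurable_const.mul ((continuous_dist.comp
      (continuous_fst.prodMk continuous_snd)).measurable.pow_const N))
  have hA : MeasurableSet A := measurableSet_le hdistm (hg.comp measurable_fst)
  have hB : MeasurableSet B := measurableSet_le hdistm (hg.comp measurable_snd)
  -- sections are closed balls
  have hr : ∀ c : ℝ, 0 ≤ c → ∀ x y : (EuclideanSpace ℝ (Fin N)),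
      (Φ t * dist x y ^ N ≤ c ↔ dist y x ≤ (c / Φ t) ^ ((N : ℝ)⁻¹)) := by
    intro c hc x y
    set r := (c / Φ t) ^ ((N : ℝ)⁻¹) with hrdef
    have hcd : 0 ≤ c / Φ t := div_nonneg hc hΦt.le
    have hrN : r ^ N = c / Φ t := by
      rw [hrdef, ← Real.rpow_natCast (_ ^ _) N, ← Real.rpow_mul hcd,
        inv_mul_cancel₀ (by exact_mod_cast hN.ne' : (N:ℝ) ≠ 0), Real.rpow_one]
    rw [dist_comm y x]
    constructor
    · intro h
      have h' : dist x y ^ N ≤ r ^ N := by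
        rw [hrN]; exact (le_div_iff₀' hΦt).2 h
      exact le_of_pow_le_pow_left₀ hN.ne' (Real.rpow_nonneg hcd _) h'
    · intro h
      have h' : dist x y ^ N ≤ r ^ N := pow_le_pow_left₀ dist_nonneg h N
      rw [hrN] at h'
      exact (le_div_iff₀' hΦt).1 h'
  have hclosed : ∀ x : (EuclideanSpace ℝ (Fin N)), ∀ c : ℝ, 0 ≤ c →
      volume {y : (EuclideanSpace ℝ (Fin N)) | Φ t * dist x y ^ N ≤ c} = ENNReal.ofReal (c / Φ t) * ωN := by
    intro x c hc
    have : {y : (EuclideanSpace ℝ (Fin N)) | Φ t * dist x y ^ N ≤ c} = closedBall x ((c / Φ t) ^ ((N : ℝ)⁻¹)) := by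
      ext y
      simp only [mem_setOf_eq, mem_closedBall]
      exact hr c hc x y
    rw [this, Measure.addHaar_closedBall _ _ (Real.rpow_nonneg (div_nonneg hc hΦt.le) _)]
    congr 1
    rw [finrank_euclideanSpace_fin, ← Real.rpow_natCast (_ ^ _) N,
      ← Real.rpow_mul (div_nonneg hc hΦt.le),
      inv_mul_cancel₀ (by exact_mod_cast hN.ne' : (N:ℝ) ≠ 0), Real.rpow_one]
  -- volumes of A and B
  set I := ∫⁻ x, ENNReal.ofReal (g x) with hIdef
  have hofdiv : ∀ x : (EuclideanSpace ℝ (Fin N)), ENNReal.ofReal (g x / Φ t)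
      = ENNReal.ofReal (g x) * (ENNReal.ofReal (Φ t))⁻¹ := by
    intro x
    rw [ENNReal.ofReal_div_of_pos hΦt, ENNReal.div_eq_inv_mul, mul_comm]
  have hintcalc : (∫⁻ x, ENNReal.ofReal (g x / Φ t) * ωN)
      = I * (ENNReal.ofReal (Φ t))⁻¹ * ωN := by
    simp_rw [hofdiv, mul_assoc]
    rw [lintegral_mul_const _ hg.ennreal_ofReal, ← mul_assoc]
  have hvolA : volume A = I * (ENNReal.ofReal (Φ t))⁻¹ * ωN := by
    rw [Measure.volume_eq_prod, Measure.prod_apply hA, ← hintcalc]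
    refine lintegral_congr fun x => ?_
    have : Prod.mk x ⁻¹' A = {y : (EuclideanSpace ℝ (Fin N)) | Φ t * dist x y ^ N ≤ g x} := rfl
    rw [this, hclosed x (g x) (hgnn x)]
  have hvolB : volume B = I * (ENNReal.ofReal (Φ t))⁻¹ * ωN := by
    rw [Measure.volume_eq_prod, Measure.prod_apply_symm hB, ← hintcalc]
    refine lintegral_congr fun y => ?_
    have : (fun x => (x, y)) ⁻¹' B = {x : (EuclideanSpace ℝ (Fin N)) | Φ t * dist y x ^ N ≤ g y} := by
      ext x; simp [hBdef, dist_comm]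
    rw [this, hclosed y (g y) (hgnn y)]
  -- put it together
  have hIeq : (∫⁻ x, ENNReal.ofReal (Φ (2 * |u x|))) = I := by
    refine lintegral_congr fun x => ?_
    rw [hgdef]; dsimp only
    rw [hψeq _ (by positivity)]
  have hvolE : volume {p : (EuclideanSpace ℝ (Fin N)) × (EuclideanSpace ℝ (Fin N)) | p.1 ≠ p.2 ∧ Φ t * dist p.1 p.2 ^ N ≤ Φ (|u p.1 - u p.2|)}
      ≤ 2 * (I * (ENNReal.ofReal (Φ t))⁻¹ * ωN) := by
    calc volume _ ≤ volume (A ∪ B) := measure_mono hEsub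
      _ ≤ volume A + volume B := measure_union_le _ _
      _ = 2 * (I * (ENNReal.ofReal (Φ t))⁻¹ * ωN) := by rw [hvolA, hvolB, two_mul]
  rw [hIeq]
  calc ENNReal.ofReal (Φ t) * volume _
      ≤ ENNReal.ofReal (Φ t) * (2 * (I * (ENNReal.ofReal (Φ t))⁻¹ * ωN)) :=
        mul_le_mul_right hvolE _
    _ = (ENNReal.ofReal (Φ t) * (ENNReal.ofReal (Φ t))⁻¹) * (2 * ωN * I) := by ring
    _ = 2 * ωN * I := by
        rw [ENNReal.mul_inv_cancel (by simpa using hΦt) ENNReal.ofReal_ne_top, one_mul]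
end

section
/- Let Φ be a Young function satisfying the global Δ₂ condition (there exists k > 0 with Φ(2t) ≤ kΦ(t) for all t > 0), and let u : ℝ^N → ℝ satisfy ∫ Φ(|u|) < ∞. For t > 0 set E_t = {(x,y) ∈ ℝ^{2N} : x ≠ y, Φ(|u(x)-u(y)|) ≥ Φ(t)·|x-y|^N}. Then lim_{t→0⁺} Φ(t)·|E_t|_{2N} = 2·ω_N·∫_{ℝ^N} Φ(|u(x)|) dx. -/
open MeasureTheory Metric Set Filter

section
variable {N : ℕ}

lemma singleton_null (hN : 0 < N) (x : EuclideanSpace ℝ (Fin N)) : volume ({x} : Set (EuclideanSpace ℝ (Fin N))) = 0 := by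
  have h1 : ({x} : Set (EuclideanSpace ℝ (Fin N))) ⊆ closedBall x 0 := by
    intro y hy; simp_all
  refine le_antisymm ?_ zero_le
  calc volume ({x} : Set (EuclideanSpace ℝ (Fin N))) ≤ volume (closedBall x 0) := measure_mono h1
    _ = 0 := by
      rw [Measure.addHaar_closedBall volume x le_rfl, finrank_euclideanSpace_fin,
        zero_pow hN.ne', ENNReal.ofReal_zero, zero_mul]

lemma slice_vol (hN : 0 < N) (x : EuclideanSpace ℝ (Fin N)) {ν A : ℝ} (hν : 0 < ν) (hA : 0 ≤ A) :
    volume {y : EuclideanSpace ℝ (Fin N) | x ≠ y ∧ ν * dist x y ^ N ≤ A}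
      = ENNReal.ofReal (A / ν) * volume (ball (0 : EuclideanSpace ℝ (Fin N)) 1) := by
  have hAν : 0 ≤ A / ν := div_nonneg hA hν.le
  set r : ℝ := (A / ν) ^ (N : ℝ)⁻¹ with hrdef
  have hrnn : 0 ≤ r := Real.rpow_nonneg hAν _
  have hrN : r ^ N = A / ν := Real.rpow_inv_natCast_pow hAν hN.ne'
  have hset : {y : EuclideanSpace ℝ (Fin N) | x ≠ y ∧ ν * dist x y ^ N ≤ A}
      = closedBall x r \ {x} := by
    ext y
    simp only [mem_setOf_eq, mem_diff, mem_closedBall, mem_singleton_iff]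
    constructor
    · rintro ⟨hxy, h⟩
      have h1 : dist x y ^ N ≤ r ^ N := by
        rw [hrN]; exact (le_div_iff₀' hν).2 h
      have h2 : dist x y ≤ r := le_of_pow_le_pow_left₀ hN.ne' hrnn h1
      exact ⟨by rwa [dist_comm], fun hyx => hxy (by rw [hyx])⟩
    · rintro ⟨h1, h2⟩
      refine ⟨fun hxy => h2 (by rw [hxy]), ?_⟩
      have : dist x y ^ N ≤ r ^ N := by
        apply pow_le_pow_left₀ dist_nonneg (by rwa [dist_comm])
      rw [hrN] at this
      exact (le_div_iff₀' hν).1 this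
  rw [hset, measure_diff_null (singleton_null hN x),
    Measure.addHaar_closedBall volume x hrnn, finrank_euclideanSpace_fin, hrN]

lemma set_meas₁ {ν : ℝ} {G : EuclideanSpace ℝ (Fin N) → ℝ} (hG : Measurable G) :
    MeasurableSet {p : EuclideanSpace ℝ (Fin N) × EuclideanSpace ℝ (Fin N) |
      p.1 ≠ p.2 ∧ ν * dist p.1 p.2 ^ N ≤ G p.1} := by
  apply MeasurableSet.inter
  · exact (measurableSet_eq_fun measurable_fst measurable_snd).compl
  · exact measurableSet_le (continuous_const.mul ((continuous_fst.dist continuous_snd).pow N)).measurable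
      (hG.comp measurable_fst)
end

section
variable {N : ℕ}

lemma set_meas₂ {ν : ℝ} {F₁ F₂ : EuclideanSpace ℝ (Fin N) → ℝ} (h1 : Measurable F₁) (h2 : Measurable F₂) :
    MeasurableSet {p : EuclideanSpace ℝ (Fin N) × EuclideanSpace ℝ (Fin N) |
      p.1 ≠ p.2 ∧ ν * dist p.1 p.2 ^ N ≤ F₁ p.1 ∧ ν * dist p.1 p.2 ^ N ≤ F₂ p.2} := by
  have hd : Measurable fun p : EuclideanSpace ℝ (Fin N) × EuclideanSpace ℝ (Fin N) =>
      ν * dist p.1 p.2 ^ N :=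
    (continuous_const.mul ((continuous_fst.dist continuous_snd).pow N)).measurable
  refine MeasurableSet.inter ((measurableSet_eq_fun measurable_fst measurable_snd).compl) ?_
  exact (measurableSet_le hd (h1.comp measurable_fst)).inter
    (measurableSet_le hd (h2.comp measurable_snd))

lemma slab_vol (hN : 0 < N) {G : EuclideanSpace ℝ (Fin N) → ℝ} (hG : Measurable G)
    (hGnn : ∀ x, 0 ≤ G x) {ν : ℝ} (hν : 0 < ν) :
    ENNReal.ofReal ν * volume {p : EuclideanSpace ℝ (Fin N) × EuclideanSpace ℝ (Fin N) |
        p.1 ≠ p.2 ∧ ν * dist p.1 p.2 ^ N ≤ G p.1}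
      = volume (ball (0 : EuclideanSpace ℝ (Fin N)) 1) * ∫⁻ x, ENNReal.ofReal (G x) := by
  rw [Measure.volume_eq_prod, Measure.prod_apply (set_meas₁ hG)]
  have hsl : ∀ x : EuclideanSpace ℝ (Fin N),
      volume (Prod.mk x ⁻¹' {p : EuclideanSpace ℝ (Fin N) × EuclideanSpace ℝ (Fin N) |
        p.1 ≠ p.2 ∧ ν * dist p.1 p.2 ^ N ≤ G p.1})
      = ENNReal.ofReal (G x / ν) * volume (ball (0 : EuclideanSpace ℝ (Fin N)) 1) := by
    intro x
    have : Prod.mk x ⁻¹' {p : EuclideanSpace ℝ (Fin N) × EuclideanSpace ℝ (Fin N) |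
        p.1 ≠ p.2 ∧ ν * dist p.1 p.2 ^ N ≤ G p.1}
        = {y | x ≠ y ∧ ν * dist x y ^ N ≤ G x} := rfl
    rw [this, slice_vol hN x hν (hGnn x)]
  simp only [hsl]
  rw [lintegral_mul_const _ ((hG.div_const ν).ennreal_ofReal),
    ← mul_assoc, ← lintegral_const_mul _ ((hG.div_const ν).ennreal_ofReal),
    mul_comm _ (volume (ball (0 : EuclideanSpace ℝ (Fin N)) 1))]
  congr 1
  refine lintegral_congr fun x => ?_
  rw [← ENNReal.ofReal_mul hν.le, mul_div_cancel₀ _ hν.ne']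

lemma swap_vol {S : Set (EuclideanSpace ℝ (Fin N) × EuclideanSpace ℝ (Fin N))}
    (hS : MeasurableSet S) : volume (Prod.swap ⁻¹' S) = volume S := by
  rw [Measure.volume_eq_prod]
  exact Measure.measurePreserving_swap.measure_preimage hS.nullMeasurableSet

lemma overlap (hN : 0 < N) {F₁ F₂ : EuclideanSpace ℝ (Fin N) → ℝ}
    (h1 : Measurable F₁) (h2 : Measurable F₂)
    (h1n : ∀ x, 0 ≤ F₁ x)
    (hi1 : ∫⁻ x, ENNReal.ofReal (F₁ x) ≠ ⊤) (hi2 : ∫⁻ x, ENNReal.ofReal (F₂ x) ≠ ⊤) :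
    Tendsto (fun ν : ℝ => ENNReal.ofReal ν *
      volume {p : EuclideanSpace ℝ (Fin N) × EuclideanSpace ℝ (Fin N) |
        p.1 ≠ p.2 ∧ ν * dist p.1 p.2 ^ N ≤ F₁ p.1 ∧ ν * dist p.1 p.2 ^ N ≤ F₂ p.2})
      (nhdsWithin 0 (Ioi 0)) (nhds 0) := by
  set ω := volume (ball (0 : EuclideanSpace ℝ (Fin N)) 1) with hω
  have hωfin : ω ≠ ⊤ := measure_ball_lt_top.ne
  set J₂ := ∫⁻ x, ENNReal.ofReal (F₂ x) with hJ₂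
  -- slice function
  set g : ℝ → EuclideanSpace ℝ (Fin N) → ENNReal := fun ν x => ENNReal.ofReal ν *
    volume {y | x ≠ y ∧ ν * dist x y ^ N ≤ F₁ x ∧ ν * dist x y ^ N ≤ F₂ y} with hg
  have hEq : ∀ ν : ℝ, ENNReal.ofReal ν *
      volume {p : EuclideanSpace ℝ (Fin N) × EuclideanSpace ℝ (Fin N) |
        p.1 ≠ p.2 ∧ ν * dist p.1 p.2 ^ N ≤ F₁ p.1 ∧ ν * dist p.1 p.2 ^ N ≤ F₂ p.2}
      = ∫⁻ x, g ν x := by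
    intro ν
    rw [Measure.volume_eq_prod, Measure.prod_apply (set_meas₂ h1 h2),
      ← lintegral_const_mul _ (measurable_measure_prodMk_left (set_meas₂ h1 h2))]
    rfl
  have key : Tendsto (fun ν : ℝ => ∫⁻ x, g ν x) (nhdsWithin 0 (Ioi 0)) (nhds 0) := by
    have h0 : (0 : ENNReal) = ∫⁻ (_ : EuclideanSpace ℝ (Fin N)), 0 := by rw [lintegral_zero]
    rw [h0]
    apply tendsto_lintegral_filter_of_dominated_convergence (fun x => ω * ENNReal.ofReal (F₁ x))
    · -- measurability
      filter_upwards with ν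
      exact (measurable_measure_prodMk_left (set_meas₂ h1 h2)).const_mul _
    · -- bound
      filter_upwards [self_mem_nhdsWithin] with ν (hν : ν ∈ Ioi 0)
      filter_upwards with x
      have hsub : {y | x ≠ y ∧ ν * dist x y ^ N ≤ F₁ x ∧ ν * dist x y ^ N ≤ F₂ y}
          ⊆ {y | x ≠ y ∧ ν * dist x y ^ N ≤ F₁ x} := fun y hy => ⟨hy.1, hy.2.1⟩
      calc g ν x ≤ ENNReal.ofReal ν * volume {y | x ≠ y ∧ ν * dist x y ^ N ≤ F₁ x} :=
            mul_le_mul_right (measure_mono hsub) _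
        _ = ENNReal.ofReal ν * (ENNReal.ofReal (F₁ x / ν) * ω) := by
            rw [slice_vol hN x hν (h1n x)]
        _ = ω * ENNReal.ofReal (F₁ x) := by
            rw [← mul_assoc, ← ENNReal.ofReal_mul hν.le, mul_div_cancel₀ _ hν.ne',
              mul_comm]
    · -- integrable bound
      rw [lintegral_const_mul _ h1.ennreal_ofReal]
      exact ENNReal.mul_ne_top hωfin hi1
    · -- pointwise limit
      filter_upwards with x
      rw [ENNReal.tendsto_nhds_zero]
      intro ε hε
      rcases eq_top_or_lt_top ε with hεtop | hεlt
      · filter_upwards with ν; rw [hεtop]; exact le_top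
      have hε2 : (0:ENNReal) < ε / 2 := ENNReal.div_pos hε.ne' (by norm_num)
      have hε2top : ε / 2 ≠ ⊤ := by
        exact (ENNReal.div_lt_top hεlt.ne (by norm_num)).ne
      -- choose M
      have hfr : J₂ / (ε / 2) ≠ ⊤ := by
        exact (ENNReal.div_lt_top hi2 hε2.ne').ne
      obtain ⟨n, hn⟩ := ENNReal.exists_nat_gt hfr
      set M : ℝ := (n : ℝ) + 1 with hM
      have hM1 : (1:ℝ) ≤ M := le_add_of_nonneg_left (Nat.cast_nonneg n)
      have hM0 : (0:ℝ) < M := by linarith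
      have hMN : J₂ / (ε / 2) ≤ ENNReal.ofReal (M ^ N) := by
        have h1' : J₂ / (ε / 2) ≤ (n : ENNReal) + 1 := le_of_lt (lt_of_lt_of_le hn (by simp))
        have h2' : ((n : ENNReal) + 1) = ENNReal.ofReal M := by
          rw [hM, ENNReal.ofReal_add (by positivity) zero_le_one]
          simp [ENNReal.ofReal_natCast]
        have h3' : ENNReal.ofReal M ≤ ENNReal.ofReal (M ^ N) :=
          ENNReal.ofReal_le_ofReal (le_self_pow₀ hM1 hN.ne')
        exact h1'.trans (h2' ▸ h3')
      have hcheb : J₂ / ENNReal.ofReal (M ^ N) ≤ ε / 2 := by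
        have h4 : (J₂ / (ε/2)) * (ε/2) ≤ ENNReal.ofReal (M^N) * (ε/2) := mul_le_mul_left hMN _
        rw [ENNReal.div_mul_cancel hε2.ne' hε2top, mul_comm] at h4
        exact ENNReal.div_le_of_le_mul h4
      -- eventual smallness of the ball term
      have htend : Tendsto (fun ν : ℝ => ENNReal.ofReal ν * volume (closedBall x M))
          (nhdsWithin (0:ℝ) (Ioi 0)) (nhds 0) := by
        have h5 : Tendsto (fun ν : ℝ => ENNReal.ofReal ν) (nhdsWithin (0:ℝ) (Ioi 0)) (nhds 0) := by
          have h := ENNReal.continuous_ofReal.tendsto (0:ℝ)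
          rw [ENNReal.ofReal_zero] at h
          exact h.mono_left nhdsWithin_le_nhds
        have := ENNReal.Tendsto.mul_const h5 (Or.inr ((measure_closedBall_lt_top : volume (closedBall x M) < ⊤).ne))
        simpa using this
      filter_upwards [(ENNReal.tendsto_nhds_zero.mp htend) (ε/2) hε2, self_mem_nhdsWithin]
        with ν hν1 hνmem
      have hνpos : (0:ℝ) < ν := hνmem
      have hsub : {y | x ≠ y ∧ ν * dist x y ^ N ≤ F₁ x ∧ ν * dist x y ^ N ≤ F₂ y}
          ⊆ closedBall x M ∪ {y | ENNReal.ofReal (ν * M ^ N) ≤ ENNReal.ofReal (F₂ y)} := by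
        intro y hy
        by_cases hdy : dist y x ≤ M
        · exact Or.inl hdy
        · refine Or.inr ?_
          push_neg at hdy
          have hdxy : M ≤ dist x y := by rw [dist_comm]; exact hdy.le
          have h6 : ν * M ^ N ≤ ν * dist x y ^ N :=
            mul_le_mul_of_nonneg_left (pow_le_pow_left₀ hM0.le hdxy N) hνpos.le
          exact ENNReal.ofReal_le_ofReal (h6.trans hy.2.2)
      have hne0 : ENNReal.ofReal (ν * M ^ N) ≠ 0 :=
        (ENNReal.ofReal_pos.mpr (by positivity)).ne'
      have hcb : ENNReal.ofReal ν * volume {y | ENNReal.ofReal (ν * M ^ N) ≤ ENNReal.ofReal (F₂ y)}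
          ≤ ε / 2 := by
        have h7 : volume {y | ENNReal.ofReal (ν * M ^ N) ≤ ENNReal.ofReal (F₂ y)}
            ≤ J₂ / ENNReal.ofReal (ν * M ^ N) :=
          meas_ge_le_lintegral_div h2.ennreal_ofReal.aemeasurable hne0 ENNReal.ofReal_ne_top
        have h8 : ENNReal.ofReal ν * (J₂ / ENNReal.ofReal (ν * M ^ N))
            = J₂ / ENNReal.ofReal (M ^ N) := by
          rw [ENNReal.ofReal_mul hνpos.le, ← mul_div_assoc,
            ENNReal.mul_div_mul_left _ _ (ENNReal.ofReal_pos.mpr hνpos).ne' ENNReal.ofReal_ne_top]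
        calc ENNReal.ofReal ν * volume {y | ENNReal.ofReal (ν * M ^ N) ≤ ENNReal.ofReal (F₂ y)}
            ≤ ENNReal.ofReal ν * (J₂ / ENNReal.ofReal (ν * M ^ N)) := mul_le_mul_right h7 _
          _ = J₂ / ENNReal.ofReal (M ^ N) := h8
          _ ≤ ε / 2 := hcheb
      calc g ν x ≤ ENNReal.ofReal ν * (volume (closedBall x M)
            + volume {y | ENNReal.ofReal (ν * M ^ N) ≤ ENNReal.ofReal (F₂ y)}) :=
            mul_le_mul_right ((measure_mono hsub).trans (measure_union_le _ _)) _
        _ = ENNReal.ofReal ν * volume (closedBall x M)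
            + ENNReal.ofReal ν * volume {y | ENNReal.ofReal (ν * M ^ N) ≤ ENNReal.ofReal (F₂ y)} :=
            mul_add _ _ _
        _ ≤ ε / 2 + ε / 2 := add_le_add hν1 hcb
        _ = ε := ENNReal.add_halves ε
  exact key.congr (fun ν => (hEq ν).symm)

lemma phi_mono {Φ : ℝ → ℝ} (hΦconv : ConvexOn ℝ (Ici 0) Φ) (hΦ0 : Φ 0 = 0)
    (hΦnn : ∀ s, 0 ≤ s → 0 ≤ Φ s) : ∀ a b : ℝ, 0 ≤ a → a ≤ b → Φ a ≤ Φ b := by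
  intro a b ha hab
  rcases (ha.trans hab).eq_or_lt with hb | hb
  · have ha0 : a = 0 := le_antisymm (hab.trans hb.symm.le) ha
    rw [ha0, ← hb]
  · have hθ0 : 0 ≤ a / b := div_nonneg ha hb.le
    have hθ1 : a / b ≤ 1 := (div_le_one hb).2 hab
    have h := hΦconv.2 (self_mem_Ici) (mem_Ici.mpr hb.le)
      (by linarith : (0:ℝ) ≤ 1 - a / b) hθ0 (by ring)
    simp only [smul_eq_mul, mul_zero, zero_add, hΦ0] at h
    rw [div_mul_cancel₀ _ hb.ne'] at h
    have hΦb : 0 ≤ Φ b := hΦnn b hb.le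
    nlinarith [h]

lemma phi_zero {Φ : ℝ → ℝ} (hΦconv : ConvexOn ℝ (Ici 0) Φ) (hΦ0 : Φ 0 = 0)
    (hΦnn : ∀ s, 0 ≤ s → 0 ≤ Φ s) {k : ℝ} (hΔ : ∀ s > (0:ℝ), Φ (2 * s) ≤ k * Φ s)
    {t₀ : ℝ} (ht₀ : 0 < t₀) (h0 : Φ t₀ = 0) : ∀ s, 0 ≤ s → Φ s = 0 := by
  have hpow : ∀ n : ℕ, Φ (2 ^ n * t₀) = 0 := by
    intro n
    induction n with
    | zero => simpa using h0
    | succ n ih =>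
      have h1 : (2:ℝ) ^ (n+1) * t₀ = 2 * (2 ^ n * t₀) := by ring
      have h2 : Φ (2 * (2 ^ n * t₀)) ≤ k * Φ (2 ^ n * t₀) := hΔ _ (by positivity)
      rw [ih, mul_zero] at h2
      rw [h1]
      exact le_antisymm h2 (hΦnn _ (by positivity))
  intro s hs
  obtain ⟨n, hn⟩ := pow_unbounded_of_one_lt (s / t₀) one_lt_two
  have hsn : s ≤ 2 ^ n * t₀ := by
    rw [div_lt_iff₀ ht₀] at hn
    linarith
  have := phi_mono hΦconv hΦ0 hΦnn s (2 ^ n * t₀) hs hsn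
  rw [hpow n] at this
  exact le_antisymm this (hΦnn s hs)

set_option maxHeartbeats 2000000 in
theorem stmt1 (N : ℕ) (hN : 0 < N) (Φ : ℝ → ℝ)
    (hΦc : ContinuousOn Φ (Ici 0)) (hΦconv : ConvexOn ℝ (Ici 0) Φ)
    (hΦ0 : Φ 0 = 0) (hΦnn : ∀ s, 0 ≤ s → 0 ≤ Φ s)
    (hΔ2 : ∃ k > 0, ∀ s > (0:ℝ), Φ (2 * s) ≤ k * Φ s)
    (u : EuclideanSpace ℝ (Fin N) → ℝ) (hu : Measurable u)
    (hfin : ∫⁻ x, ENNReal.ofReal (Φ (|u x|)) < ⊤) :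
    Tendsto (fun t : ℝ => ENNReal.ofReal (Φ t) *
      volume {p : EuclideanSpace ℝ (Fin N) × EuclideanSpace ℝ (Fin N) |
        p.1 ≠ p.2 ∧ Φ t * dist p.1 p.2 ^ N ≤ Φ (|u p.1 - u p.2|)})
      (nhdsWithin 0 (Ioi 0))
      (nhds (2 * volume (ball (0 : EuclideanSpace ℝ (Fin N)) 1) *
        ∫⁻ x, ENNReal.ofReal (Φ (|u x|)))) := by
  obtain ⟨k, hk, hΔ⟩ := hΔ2
  by_cases hpos : ∀ t : ℝ, 0 < t → 0 < Φ t
  swap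
  · -- degenerate case : Φ vanishes somewhere, hence everywhere
    push_neg at hpos
    obtain ⟨t₀, ht₀, ht₀'⟩ := hpos
    have hz : ∀ s, 0 ≤ s → Φ s = 0 :=
      phi_zero hΦconv hΦ0 hΦnn hΔ ht₀ (le_antisymm ht₀' (hΦnn _ ht₀.le))
    have hIz : (∫⁻ x, ENNReal.ofReal (Φ (|u x|))) = 0 := by
      have : ∀ x : EuclideanSpace ℝ (Fin N), ENNReal.ofReal (Φ (|u x|)) = 0 := fun x => by
        rw [hz _ (abs_nonneg _), ENNReal.ofReal_zero]
      simp only [this, lintegral_zero]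
    rw [hIz, mul_zero]
    have hconst : Tendsto (fun _ : ℝ => (0:ENNReal)) (nhdsWithin (0:ℝ) (Ioi 0)) (nhds 0) :=
      tendsto_const_nhds
    refine hconst.congr' ?_
    filter_upwards [self_mem_nhdsWithin] with t ht
    rw [hz t (le_of_lt ht), ENNReal.ofReal_zero, zero_mul]
  -- main case
  set k' : ℝ := max k 1 with hk'def
  have hk'1 : (1:ℝ) ≤ k' := le_max_right _ _
  have hk'0 : (0:ℝ) < k' := lt_of_lt_of_le one_pos hk'1
  have hΔ' : ∀ s : ℝ, 0 ≤ s → Φ (2*s) ≤ k' * Φ s := by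
    intro s hs
    rcases hs.eq_or_lt with h | h
    · rw [← h]; norm_num [hΦ0]
    · exact (hΔ s h).trans (mul_le_mul_of_nonneg_right (le_max_left _ _) (hΦnn _ h.le))
  have hmono : ∀ a b : ℝ, 0 ≤ a → a ≤ b → Φ a ≤ Φ b := phi_mono hΦconv hΦ0 hΦnn
  set ψ : ℝ → ℝ := fun s => Φ (max s 0) with hψdef
  have hψc : Continuous ψ :=
    hΦc.comp_continuous (continuous_id.max continuous_const) (fun s => mem_Ici.mpr (le_max_right _ _))
  have hψmono : Monotone ψ := fun a b hab =>
    hmono _ _ (le_max_right _ _) (max_le_max hab le_rfl)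
  have hψnn : ∀ s, 0 ≤ ψ s := fun s => hΦnn _ (le_max_right _ _)
  have hψeq : ∀ s, 0 ≤ s → ψ s = Φ s := fun s hs => by
    simp only [hψdef, max_eq_left hs]
  have hψiter : ∀ (m : ℕ) (s : ℝ), 0 ≤ s → Φ (2^m * s) ≤ k'^m * Φ s := by
    intro m
    induction m with
    | zero => intro s hs; simp
    | succ m ih =>
      intro s hs
      have h1 : (2:ℝ)^(m+1) * s = 2 * (2^m * s) := by ring
      rw [h1]
      calc Φ (2*(2^m*s)) ≤ k' * Φ (2^m*s) := hΔ' _ (by positivity)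
        _ ≤ k' * (k'^m * Φ s) := mul_le_mul_of_nonneg_left (ih s hs) hk'0.le
        _ = k'^(m+1) * Φ s := by ring
  have hscale : ∀ c : ℝ, ∃ κ : ℝ, 0 < κ ∧ ∀ s, 0 ≤ s → ψ (c * s) ≤ κ * ψ s := by
    intro c
    obtain ⟨m, hm⟩ := pow_unbounded_of_one_lt c one_lt_two
    refine ⟨k'^m, pow_pos hk'0 m, fun s hs => ?_⟩
    have h1 : ψ (c*s) ≤ ψ (2^m * s) := hψmono (mul_le_mul_of_nonneg_right hm.le hs)
    rw [hψeq (2^m * s) (by positivity)] at h1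
    calc ψ (c*s) ≤ Φ (2^m * s) := h1
      _ ≤ k'^m * Φ s := hψiter m s hs
      _ = k'^m * ψ s := by rw [hψeq s hs]
  have hmes : ∀ c : ℝ, Measurable fun x : EuclideanSpace ℝ (Fin N) => ψ (c * |u x|) :=
    fun c => hψc.measurable.comp ((hu.abs).const_mul c)
  have hmesE : ∀ c : ℝ, Measurable fun x : EuclideanSpace ℝ (Fin N) =>
      ENNReal.ofReal (ψ (c * |u x|)) := fun c => (hmes c).ennreal_ofReal
  set I := ∫⁻ x, ENNReal.ofReal (Φ (|u x|)) with hIdef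
  have hIne : I ≠ ⊤ := hfin.ne
  set J : ℝ → ENNReal := fun c => ∫⁻ x, ENNReal.ofReal (ψ (c * |u x|)) with hJdef
  have hJ1 : J 1 = I := by
    rw [hJdef, hIdef]
    exact lintegral_congr fun x => by rw [one_mul, hψeq _ (abs_nonneg _)]
  have hJle : ∀ c : ℝ, ∀ κ : ℝ, 0 < κ → (∀ s, 0 ≤ s → ψ (c * s) ≤ κ * ψ s) →
      J c ≤ ENNReal.ofReal κ * I := by
    intro c κ hκ hs
    calc J c ≤ ∫⁻ x, ENNReal.ofReal (κ * ψ (|u x|)) :=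
        lintegral_mono fun x => ENNReal.ofReal_le_ofReal (hs _ (abs_nonneg _))
      _ = ∫⁻ x, ENNReal.ofReal κ * ENNReal.ofReal (ψ (|u x|)) :=
        lintegral_congr fun x => ENNReal.ofReal_mul hκ.le
      _ = ENNReal.ofReal κ * ∫⁻ x, ENNReal.ofReal (ψ (|u x|)) :=
        lintegral_const_mul _ (hψc.measurable.comp hu.abs).ennreal_ofReal
      _ = ENNReal.ofReal κ * I := by
        rw [hIdef]
        congr 1
        exact lintegral_congr fun x => by rw [hψeq _ (abs_nonneg _)]
  have hJfin : ∀ c : ℝ, J c ≠ ⊤ := by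
    intro c
    obtain ⟨κ, hκ, hs⟩ := hscale c
    exact ne_top_of_le_ne_top (ENNReal.mul_ne_top ENNReal.ofReal_ne_top hIne) (hJle c κ hκ hs)
  have hJcont : Tendsto J (nhds 1) (nhds I) := by
    obtain ⟨κ₂, hκ₂, hs₂⟩ := hscale 2
    have hfI : (∫⁻ x, ENNReal.ofReal (ψ (|u x|))) = I := by
      rw [hIdef]; exact lintegral_congr fun x => by rw [hψeq _ (abs_nonneg _)]
    have hmes1 : Measurable fun x : EuclideanSpace ℝ (Fin N) => ENNReal.ofReal (ψ (|u x|)) := by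
      have := hmesE 1
      simpa using this
    have hboundfin : (∫⁻ x, ENNReal.ofReal (κ₂ * ψ (|u x|))) ≠ ⊤ := by
      rw [show (fun x : EuclideanSpace ℝ (Fin N) => ENNReal.ofReal (κ₂ * ψ (|u x|)))
          = fun x => ENNReal.ofReal κ₂ * ENNReal.ofReal (ψ (|u x|)) from
          funext fun x => ENNReal.ofReal_mul hκ₂.le,
        lintegral_const_mul _ hmes1, hfI]
      exact ENNReal.mul_ne_top ENNReal.ofReal_ne_top hIne
    have key := tendsto_lintegral_filter_of_dominated_convergence
      (μ := volume) (l := nhds (1:ℝ))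
      (F := fun c x => ENNReal.ofReal (ψ (c * |u x|)))
      (f := fun x => ENNReal.ofReal (ψ (|u x|)))
      (fun x => ENNReal.ofReal (κ₂ * ψ (|u x|)))
      (Eventually.of_forall fun c => hmesE c)
      ?_ hboundfin ?_
    · rw [hfI] at key; exact key
    · filter_upwards [Iio_mem_nhds (by norm_num : (1:ℝ) < 2)] with c hc
      filter_upwards with x
      refine ENNReal.ofReal_le_ofReal ?_
      calc ψ (c * |u x|) ≤ ψ (2 * |u x|) :=
          hψmono (mul_le_mul_of_nonneg_right (le_of_lt hc) (abs_nonneg _))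
        _ ≤ κ₂ * ψ (|u x|) := hs₂ _ (abs_nonneg _)
    · filter_upwards with x
      have hcont : Continuous fun c : ℝ => ENNReal.ofReal (ψ (c * |u x|)) :=
        ENNReal.continuous_ofReal.comp (hψc.comp (continuous_id.mul continuous_const))
      have := hcont.tendsto 1
      simpa using this
  -- outer-scope helpers
  have hmes1 : Measurable fun x : EuclideanSpace ℝ (Fin N) => ENNReal.ofReal (ψ (|u x|)) := by
    have := hmesE 1
    simpa using this
  have hfI : (∫⁻ x, ENNReal.ofReal (ψ (|u x|))) = I := by
    rw [hIdef]; exact lintegral_congr fun x => by rw [hψeq _ (abs_nonneg _)]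
  have hconstfin : ∀ κ : ℝ, 0 ≤ κ → (∫⁻ x, ENNReal.ofReal (κ * ψ (|u x|))) ≠ ⊤ := by
    intro κ hκ
    rw [show (fun x : EuclideanSpace ℝ (Fin N) => ENNReal.ofReal (κ * ψ (|u x|)))
        = fun x => ENNReal.ofReal κ * ENNReal.ofReal (ψ (|u x|)) from
        funext fun x => ENNReal.ofReal_mul hκ,
      lintegral_const_mul _ hmes1, hfI]
    exact ENNReal.mul_ne_top ENNReal.ofReal_ne_top hIne
  set ω := volume (ball (0 : EuclideanSpace ℝ (Fin N)) 1) with hωdef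
  have hωne : ω ≠ ⊤ :=
    (measure_ball_lt_top : volume (ball (0 : EuclideanSpace ℝ (Fin N)) 1) < ⊤).ne
  have hDvol : ∀ (c ν : ℝ), 0 < ν →
      ENNReal.ofReal ν * volume {p : EuclideanSpace ℝ (Fin N) × EuclideanSpace ℝ (Fin N) |
        p.1 ≠ p.2 ∧ ν * dist p.1 p.2 ^ N ≤ ψ (c * |u p.1|)} = ω * J c := fun c ν hν =>
    slab_vol hN (hmes c) (fun x => hψnn _) hν
  have hswap : ∀ (c ν : ℝ),
      volume {p : EuclideanSpace ℝ (Fin N) × EuclideanSpace ℝ (Fin N) |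
        p.1 ≠ p.2 ∧ ν * dist p.1 p.2 ^ N ≤ ψ (c * |u p.2|)}
      = volume {p : EuclideanSpace ℝ (Fin N) × EuclideanSpace ℝ (Fin N) |
        p.1 ≠ p.2 ∧ ν * dist p.1 p.2 ^ N ≤ ψ (c * |u p.1|)} := by
    intro c ν
    rw [← swap_vol (set_meas₁ (hmes c))]
    congr 1
    ext p
    simp only [mem_preimage, Prod.fst_swap, Prod.snd_swap, mem_setOf_eq, Prod.swap]
    rw [ne_comm, dist_comm]
  set HH : ℝ → ENNReal := fun ν => ENNReal.ofReal ν *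
    volume {p : EuclideanSpace ℝ (Fin N) × EuclideanSpace ℝ (Fin N) |
      p.1 ≠ p.2 ∧ ν * dist p.1 p.2 ^ N ≤ ψ (|u p.1 - u p.2|)} with hHHdef
  -- upper bound for the limsup
  have hUB : ∀ ε : ℝ, ε ∈ Ioo (0:ℝ) 1 →
      limsup HH (nhdsWithin (0:ℝ) (Ioi 0)) ≤ 2 * (ω * J (1+ε)) := by
    rintro ε ⟨hε0, hε1⟩
    have hO : Tendsto (fun ν : ℝ => ENNReal.ofReal ν *
        volume {p : EuclideanSpace ℝ (Fin N) × EuclideanSpace ℝ (Fin N) |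
          p.1 ≠ p.2 ∧ ν * dist p.1 p.2 ^ N ≤ ψ ((1+ε⁻¹) * |u p.1|) ∧
            ν * dist p.1 p.2 ^ N ≤ ψ ((1+ε⁻¹) * |u p.2|)})
        (nhdsWithin (0:ℝ) (Ioi 0)) (nhds 0) :=
      overlap hN (hmes (1+ε⁻¹)) (hmes (1+ε⁻¹)) (fun x => hψnn _)
        (hJfin (1+ε⁻¹)) (hJfin (1+ε⁻¹))
    have hHle : ∀ᶠ ν in nhdsWithin (0:ℝ) (Ioi 0), HH ν ≤ 2 * (ω * J (1+ε)) +
        ENNReal.ofReal ν * volume {p : EuclideanSpace ℝ (Fin N) × EuclideanSpace ℝ (Fin N) |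
          p.1 ≠ p.2 ∧ ν * dist p.1 p.2 ^ N ≤ ψ ((1+ε⁻¹) * |u p.1|) ∧
            ν * dist p.1 p.2 ^ N ≤ ψ ((1+ε⁻¹) * |u p.2|)} := by
      filter_upwards [self_mem_nhdsWithin] with ν hνmem
      have hν : (0:ℝ) < ν := hνmem
      have hincl : {p : EuclideanSpace ℝ (Fin N) × EuclideanSpace ℝ (Fin N) |
          p.1 ≠ p.2 ∧ ν * dist p.1 p.2 ^ N ≤ ψ (|u p.1 - u p.2|)} ⊆
          ({p : EuclideanSpace ℝ (Fin N) × EuclideanSpace ℝ (Fin N) |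
            p.1 ≠ p.2 ∧ ν * dist p.1 p.2 ^ N ≤ ψ ((1+ε) * |u p.1|)} ∪
           {p : EuclideanSpace ℝ (Fin N) × EuclideanSpace ℝ (Fin N) |
            p.1 ≠ p.2 ∧ ν * dist p.1 p.2 ^ N ≤ ψ ((1+ε) * |u p.2|)}) ∪
          {p : EuclideanSpace ℝ (Fin N) × EuclideanSpace ℝ (Fin N) |
            p.1 ≠ p.2 ∧ ν * dist p.1 p.2 ^ N ≤ ψ ((1+ε⁻¹) * |u p.1|) ∧
              ν * dist p.1 p.2 ^ N ≤ ψ ((1+ε⁻¹) * |u p.2|)} := by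
        rintro p ⟨hne, hle⟩
        have habs : |u p.1 - u p.2| ≤ |u p.1| + |u p.2| := abs_sub _ _
        rcases le_or_gt (|u p.2|) (ε * |u p.1|) with h | h
        · exact Or.inl (Or.inl ⟨hne, hle.trans (hψmono (by nlinarith [abs_nonneg (u p.1)]))⟩)
        · rcases le_or_gt (|u p.1|) (ε * |u p.2|) with h' | h'
          · exact Or.inl (Or.inr ⟨hne, hle.trans (hψmono (by nlinarith [abs_nonneg (u p.2)]))⟩)
          · refine Or.inr ⟨hne, hle.trans (hψmono ?_), hle.trans (hψmono ?_)⟩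
            · have h2 : |u p.2| ≤ ε⁻¹ * |u p.1| := by
                rw [inv_mul_eq_div, le_div_iff₀ hε0]
                nlinarith
              nlinarith
            · have h2 : |u p.1| ≤ ε⁻¹ * |u p.2| := by
                rw [inv_mul_eq_div, le_div_iff₀ hε0]
                nlinarith
              nlinarith
      show ENNReal.ofReal ν * volume {p : EuclideanSpace ℝ (Fin N) × EuclideanSpace ℝ (Fin N) |
          p.1 ≠ p.2 ∧ ν * dist p.1 p.2 ^ N ≤ ψ (|u p.1 - u p.2|)} ≤ _
      calc ENNReal.ofReal ν * volume {p : EuclideanSpace ℝ (Fin N) × EuclideanSpace ℝ (Fin N) |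
            p.1 ≠ p.2 ∧ ν * dist p.1 p.2 ^ N ≤ ψ (|u p.1 - u p.2|)}
          ≤ ENNReal.ofReal ν * ((volume {p : EuclideanSpace ℝ (Fin N) × EuclideanSpace ℝ (Fin N) |
              p.1 ≠ p.2 ∧ ν * dist p.1 p.2 ^ N ≤ ψ ((1+ε) * |u p.1|)} +
            volume {p : EuclideanSpace ℝ (Fin N) × EuclideanSpace ℝ (Fin N) |
              p.1 ≠ p.2 ∧ ν * dist p.1 p.2 ^ N ≤ ψ ((1+ε) * |u p.2|)}) +
            volume {p : EuclideanSpace ℝ (Fin N) × EuclideanSpace ℝ (Fin N) |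
              p.1 ≠ p.2 ∧ ν * dist p.1 p.2 ^ N ≤ ψ ((1+ε⁻¹) * |u p.1|) ∧
                ν * dist p.1 p.2 ^ N ≤ ψ ((1+ε⁻¹) * |u p.2|)}) := by
            refine mul_le_mul_right ((measure_mono hincl).trans ?_) _
            exact (measure_union_le _ _).trans (add_le_add_left (measure_union_le _ _) _)
        _ = (ENNReal.ofReal ν * volume {p : EuclideanSpace ℝ (Fin N) × EuclideanSpace ℝ (Fin N) |
              p.1 ≠ p.2 ∧ ν * dist p.1 p.2 ^ N ≤ ψ ((1+ε) * |u p.1|)} +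
            ENNReal.ofReal ν * volume {p : EuclideanSpace ℝ (Fin N) × EuclideanSpace ℝ (Fin N) |
              p.1 ≠ p.2 ∧ ν * dist p.1 p.2 ^ N ≤ ψ ((1+ε) * |u p.2|)}) +
            ENNReal.ofReal ν * volume {p : EuclideanSpace ℝ (Fin N) × EuclideanSpace ℝ (Fin N) |
              p.1 ≠ p.2 ∧ ν * dist p.1 p.2 ^ N ≤ ψ ((1+ε⁻¹) * |u p.1|) ∧
                ν * dist p.1 p.2 ^ N ≤ ψ ((1+ε⁻¹) * |u p.2|)} := by ring
        _ = 2 * (ω * J (1+ε)) +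
            ENNReal.ofReal ν * volume {p : EuclideanSpace ℝ (Fin N) × EuclideanSpace ℝ (Fin N) |
              p.1 ≠ p.2 ∧ ν * dist p.1 p.2 ^ N ≤ ψ ((1+ε⁻¹) * |u p.1|) ∧
                ν * dist p.1 p.2 ^ N ≤ ψ ((1+ε⁻¹) * |u p.2|)} := by
            rw [hswap (1+ε) ν, hDvol (1+ε) ν hν, ← two_mul]
    have hlim2 : Tendsto (fun ν : ℝ => 2 * (ω * J (1+ε)) +
        ENNReal.ofReal ν * volume {p : EuclideanSpace ℝ (Fin N) × EuclideanSpace ℝ (Fin N) |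
          p.1 ≠ p.2 ∧ ν * dist p.1 p.2 ^ N ≤ ψ ((1+ε⁻¹) * |u p.1|) ∧
            ν * dist p.1 p.2 ^ N ≤ ψ ((1+ε⁻¹) * |u p.2|)})
        (nhdsWithin (0:ℝ) (Ioi 0)) (nhds (2 * (ω * J (1+ε)))) := by
      have h := (tendsto_const_nhds (x := 2 * (ω * J (1+ε)))).add hO
      simpa using h
    calc limsup HH (nhdsWithin (0:ℝ) (Ioi 0))
        ≤ limsup (fun ν : ℝ => 2 * (ω * J (1+ε)) +
            ENNReal.ofReal ν * volume {p : EuclideanSpace ℝ (Fin N) × EuclideanSpace ℝ (Fin N) |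
              p.1 ≠ p.2 ∧ ν * dist p.1 p.2 ^ N ≤ ψ ((1+ε⁻¹) * |u p.1|) ∧
                ν * dist p.1 p.2 ^ N ≤ ψ ((1+ε⁻¹) * |u p.2|)})
          (nhdsWithin (0:ℝ) (Ioi 0)) := limsup_le_limsup hHle
      _ = 2 * (ω * J (1+ε)) := hlim2.limsup_eq
  -- lower bound for the liminf
  have hLB : ∀ ε : ℝ, ε ∈ Ioo (0:ℝ) 1 →
      2 * (ω * J (1-ε)) ≤ liminf HH (nhdsWithin (0:ℝ) (Ioi 0)) := by
    rintro ε ⟨hε0, hε1⟩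
    obtain ⟨κ, hκ0, hκs⟩ := hscale ((1-ε)/ε)
    have hF₂m : Measurable fun x : EuclideanSpace ℝ (Fin N) => κ * ψ (|u x|) :=
      (hψc.measurable.comp hu.abs).const_mul κ
    have hO : Tendsto (fun ν : ℝ => ENNReal.ofReal ν *
        volume {p : EuclideanSpace ℝ (Fin N) × EuclideanSpace ℝ (Fin N) |
          p.1 ≠ p.2 ∧ ν * dist p.1 p.2 ^ N ≤ ψ ((1-ε) * |u p.1|) ∧
            ν * dist p.1 p.2 ^ N ≤ κ * ψ (|u p.2|)})
        (nhdsWithin (0:ℝ) (Ioi 0)) (nhds 0) :=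
      overlap hN (hmes (1-ε)) hF₂m (fun x => hψnn _) (hJfin (1-ε)) (hconstfin κ hκ0.le)
    have hkey : ∀ᶠ ν in nhdsWithin (0:ℝ) (Ioi 0), 2 * (ω * J (1-ε)) ≤ HH ν +
        2 * (ENNReal.ofReal ν * volume {p : EuclideanSpace ℝ (Fin N) × EuclideanSpace ℝ (Fin N) |
          p.1 ≠ p.2 ∧ ν * dist p.1 p.2 ^ N ≤ ψ ((1-ε) * |u p.1|) ∧
            ν * dist p.1 p.2 ^ N ≤ κ * ψ (|u p.2|)}) := by
      filter_upwards [self_mem_nhdsWithin] with ν hνmem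
      have hν : (0:ℝ) < ν := hνmem
      set L : Set (EuclideanSpace ℝ (Fin N) × EuclideanSpace ℝ (Fin N)) :=
        {p : EuclideanSpace ℝ (Fin N) × EuclideanSpace ℝ (Fin N) |
          p.1 ≠ p.2 ∧ ν * dist p.1 p.2 ^ N ≤ ψ ((1-ε) * |u p.1|)} ∩
        {p : EuclideanSpace ℝ (Fin N) × EuclideanSpace ℝ (Fin N) |
          |u p.2| ≤ ε * |u p.1|} with hLdef
      have hLmeas : MeasurableSet L :=
        (set_meas₁ (hmes (1-ε))).inter
          (measurableSet_le (hu.abs.comp measurable_snd) ((hu.abs.comp measurable_fst).const_mul ε))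
      have hLE : L ⊆ {p : EuclideanSpace ℝ (Fin N) × EuclideanSpace ℝ (Fin N) |
          p.1 ≠ p.2 ∧ ν * dist p.1 p.2 ^ N ≤ ψ (|u p.1 - u p.2|)} := by
        rintro p ⟨⟨hne, hle⟩, hba⟩
        refine ⟨hne, hle.trans (hψmono ?_)⟩
        have h1 : |u p.1| - |u p.2| ≤ |u p.1 - u p.2| := abs_sub_abs_le_abs_sub _ _
        simp only [mem_setOf_eq] at hba
        nlinarith
      have hswapLE : Prod.swap ⁻¹' L ⊆ {p : EuclideanSpace ℝ (Fin N) × EuclideanSpace ℝ (Fin N) |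
          p.1 ≠ p.2 ∧ ν * dist p.1 p.2 ^ N ≤ ψ (|u p.1 - u p.2|)} := by
        rintro p ⟨⟨hne, hle⟩, hba⟩
        simp only [mem_setOf_eq, Prod.fst_swap, Prod.snd_swap] at hne hle hba
        refine ⟨hne.symm, ?_⟩
        rw [dist_comm] at hle
        refine hle.trans (hψmono ?_)
        have h1 : |u p.2| - |u p.1| ≤ |u p.2 - u p.1| := abs_sub_abs_le_abs_sub _ _
        rw [abs_sub_comm (u p.2) (u p.1)] at h1
        nlinarith
      have hdisj : Disjoint L (Prod.swap ⁻¹' L) := by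
        rw [Set.disjoint_left]
        rintro p ⟨⟨hne, hle⟩, hba⟩ ⟨⟨hne', hle'⟩, hab⟩
        simp only [mem_setOf_eq] at hba
        simp only [mem_setOf_eq, Prod.fst_swap, Prod.snd_swap] at hab
        have ha0 : |u p.1| = 0 := by nlinarith [abs_nonneg (u p.1), abs_nonneg (u p.2)]
        have hψz : ψ ((1-ε) * |u p.1|) = 0 := by
          rw [ha0, mul_zero, hψeq 0 le_rfl, hΦ0]
        have hd : 0 < dist p.1 p.2 := dist_pos.mpr hne
        have hpos' : 0 < ν * dist p.1 p.2 ^ N := by positivity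
        rw [hψz] at hle
        linarith
      have hDL : {p : EuclideanSpace ℝ (Fin N) × EuclideanSpace ℝ (Fin N) |
          p.1 ≠ p.2 ∧ ν * dist p.1 p.2 ^ N ≤ ψ ((1-ε) * |u p.1|)} ⊆ L ∪
          {p : EuclideanSpace ℝ (Fin N) × EuclideanSpace ℝ (Fin N) |
            p.1 ≠ p.2 ∧ ν * dist p.1 p.2 ^ N ≤ ψ ((1-ε) * |u p.1|) ∧
              ν * dist p.1 p.2 ^ N ≤ κ * ψ (|u p.2|)} := by
        rintro p ⟨hne, hle⟩
        by_cases hb : |u p.2| ≤ ε * |u p.1|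
        · exact Or.inl ⟨⟨hne, hle⟩, hb⟩
        · push_neg at hb
          refine Or.inr ⟨hne, hle, hle.trans ?_⟩
          have h1 : ψ ((1-ε) * |u p.1|) ≤ κ * ψ (ε * |u p.1|) := by
            have h := hκs (ε * |u p.1|) (by positivity)
            rw [show (1-ε)/ε * (ε * |u p.1|) = (1-ε) * |u p.1| by field_simp] at h
            exact h
          exact h1.trans (mul_le_mul_of_nonneg_left (hψmono hb.le) hκ0.le)
      have c1 : volume {p : EuclideanSpace ℝ (Fin N) × EuclideanSpace ℝ (Fin N) |
            p.1 ≠ p.2 ∧ ν * dist p.1 p.2 ^ N ≤ ψ ((1-ε) * |u p.1|)}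
          ≤ volume L + volume {p : EuclideanSpace ℝ (Fin N) × EuclideanSpace ℝ (Fin N) |
            p.1 ≠ p.2 ∧ ν * dist p.1 p.2 ^ N ≤ ψ ((1-ε) * |u p.1|) ∧
              ν * dist p.1 p.2 ^ N ≤ κ * ψ (|u p.2|)} :=
        (measure_mono hDL).trans (measure_union_le _ _)
      have c3 : volume (Prod.swap ⁻¹' L) = volume L := swap_vol hLmeas
      have c2 : volume L + volume L ≤ volume {p : EuclideanSpace ℝ (Fin N) × EuclideanSpace ℝ (Fin N) |
          p.1 ≠ p.2 ∧ ν * dist p.1 p.2 ^ N ≤ ψ (|u p.1 - u p.2|)} := by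
        rw [show volume L + volume L = volume L + volume (Prod.swap ⁻¹' L) by rw [c3],
          ← measure_union hdisj (hLmeas.preimage measurable_swap)]
        exact measure_mono (union_subset hLE hswapLE)
      have c4 : 2 * volume {p : EuclideanSpace ℝ (Fin N) × EuclideanSpace ℝ (Fin N) |
            p.1 ≠ p.2 ∧ ν * dist p.1 p.2 ^ N ≤ ψ ((1-ε) * |u p.1|)}
          ≤ volume {p : EuclideanSpace ℝ (Fin N) × EuclideanSpace ℝ (Fin N) |
            p.1 ≠ p.2 ∧ ν * dist p.1 p.2 ^ N ≤ ψ (|u p.1 - u p.2|)} +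
          2 * volume {p : EuclideanSpace ℝ (Fin N) × EuclideanSpace ℝ (Fin N) |
            p.1 ≠ p.2 ∧ ν * dist p.1 p.2 ^ N ≤ ψ ((1-ε) * |u p.1|) ∧
              ν * dist p.1 p.2 ^ N ≤ κ * ψ (|u p.2|)} := by
        calc 2 * volume {p : EuclideanSpace ℝ (Fin N) × EuclideanSpace ℝ (Fin N) |
              p.1 ≠ p.2 ∧ ν * dist p.1 p.2 ^ N ≤ ψ ((1-ε) * |u p.1|)}
            ≤ 2 * (volume L + volume {p : EuclideanSpace ℝ (Fin N) × EuclideanSpace ℝ (Fin N) |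
              p.1 ≠ p.2 ∧ ν * dist p.1 p.2 ^ N ≤ ψ ((1-ε) * |u p.1|) ∧
                ν * dist p.1 p.2 ^ N ≤ κ * ψ (|u p.2|)}) := mul_le_mul_right c1 _
          _ = (volume L + volume L) + 2 * volume {p : EuclideanSpace ℝ (Fin N) × EuclideanSpace ℝ (Fin N) |
              p.1 ≠ p.2 ∧ ν * dist p.1 p.2 ^ N ≤ ψ ((1-ε) * |u p.1|) ∧
                ν * dist p.1 p.2 ^ N ≤ κ * ψ (|u p.2|)} := by ring
          _ ≤ _ := add_le_add_left c2 _
      show 2 * (ω * J (1-ε)) ≤ ENNReal.ofReal ν * volume {p : EuclideanSpace ℝ (Fin N) × EuclideanSpace ℝ (Fin N) |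
          p.1 ≠ p.2 ∧ ν * dist p.1 p.2 ^ N ≤ ψ (|u p.1 - u p.2|)} + _
      calc 2 * (ω * J (1-ε))
          = 2 * (ENNReal.ofReal ν * volume {p : EuclideanSpace ℝ (Fin N) × EuclideanSpace ℝ (Fin N) |
            p.1 ≠ p.2 ∧ ν * dist p.1 p.2 ^ N ≤ ψ ((1-ε) * |u p.1|)}) := by rw [hDvol (1-ε) ν hν]
        _ = ENNReal.ofReal ν * (2 * volume {p : EuclideanSpace ℝ (Fin N) × EuclideanSpace ℝ (Fin N) |
            p.1 ≠ p.2 ∧ ν * dist p.1 p.2 ^ N ≤ ψ ((1-ε) * |u p.1|)}) := by ring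
        _ ≤ ENNReal.ofReal ν * (volume {p : EuclideanSpace ℝ (Fin N) × EuclideanSpace ℝ (Fin N) |
            p.1 ≠ p.2 ∧ ν * dist p.1 p.2 ^ N ≤ ψ (|u p.1 - u p.2|)} +
            2 * volume {p : EuclideanSpace ℝ (Fin N) × EuclideanSpace ℝ (Fin N) |
            p.1 ≠ p.2 ∧ ν * dist p.1 p.2 ^ N ≤ ψ ((1-ε) * |u p.1|) ∧
              ν * dist p.1 p.2 ^ N ≤ κ * ψ (|u p.2|)}) := mul_le_mul_right c4 _
        _ = ENNReal.ofReal ν * volume {p : EuclideanSpace ℝ (Fin N) × EuclideanSpace ℝ (Fin N) |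
            p.1 ≠ p.2 ∧ ν * dist p.1 p.2 ^ N ≤ ψ (|u p.1 - u p.2|)} +
            2 * (ENNReal.ofReal ν * volume {p : EuclideanSpace ℝ (Fin N) × EuclideanSpace ℝ (Fin N) |
            p.1 ≠ p.2 ∧ ν * dist p.1 p.2 ^ N ≤ ψ ((1-ε) * |u p.1|) ∧
              ν * dist p.1 p.2 ^ N ≤ κ * ψ (|u p.2|)}) := by ring
    have h2R : Tendsto (fun ν : ℝ => 2 * (ENNReal.ofReal ν *
        volume {p : EuclideanSpace ℝ (Fin N) × EuclideanSpace ℝ (Fin N) |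
          p.1 ≠ p.2 ∧ ν * dist p.1 p.2 ^ N ≤ ψ ((1-ε) * |u p.1|) ∧
            ν * dist p.1 p.2 ^ N ≤ κ * ψ (|u p.2|)}))
        (nhdsWithin (0:ℝ) (Ioi 0)) (nhds 0) := by
      have h := ENNReal.Tendsto.const_mul (a := 2) hO (Or.inr (by norm_num))
      simpa using h
    have hφt : Tendsto (fun ν : ℝ => 2 * (ω * J (1-ε)) - 2 * (ENNReal.ofReal ν *
        volume {p : EuclideanSpace ℝ (Fin N) × EuclideanSpace ℝ (Fin N) |
          p.1 ≠ p.2 ∧ ν * dist p.1 p.2 ^ N ≤ ψ ((1-ε) * |u p.1|) ∧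
            ν * dist p.1 p.2 ^ N ≤ κ * ψ (|u p.2|)}))
        (nhdsWithin (0:ℝ) (Ioi 0)) (nhds (2 * (ω * J (1-ε)))) := by
      have h := ENNReal.Tendsto.sub (tendsto_const_nhds (x := 2 * (ω * J (1-ε)))) h2R
        (Or.inr (by norm_num))
      simpa using h
    have hged : ∀ᶠ ν in nhdsWithin (0:ℝ) (Ioi 0), (2 * (ω * J (1-ε)) - 2 * (ENNReal.ofReal ν *
        volume {p : EuclideanSpace ℝ (Fin N) × EuclideanSpace ℝ (Fin N) |
          p.1 ≠ p.2 ∧ ν * dist p.1 p.2 ^ N ≤ ψ ((1-ε) * |u p.1|) ∧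
            ν * dist p.1 p.2 ^ N ≤ κ * ψ (|u p.2|)})) ≤ HH ν :=
      hkey.mono fun ν h => tsub_le_iff_right.mpr h
    calc 2 * (ω * J (1-ε))
        = liminf (fun ν : ℝ => 2 * (ω * J (1-ε)) - 2 * (ENNReal.ofReal ν *
          volume {p : EuclideanSpace ℝ (Fin N) × EuclideanSpace ℝ (Fin N) |
            p.1 ≠ p.2 ∧ ν * dist p.1 p.2 ^ N ≤ ψ ((1-ε) * |u p.1|) ∧
              ν * dist p.1 p.2 ^ N ≤ κ * ψ (|u p.2|)}))
          (nhdsWithin (0:ℝ) (Ioi 0)) := hφt.liminf_eq.symm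
      _ ≤ liminf HH (nhdsWithin (0:ℝ) (Ioi 0)) := liminf_le_liminf hged
  -- endgame
  have h1p : Tendsto (fun ε : ℝ => (1:ℝ) + ε) (nhdsWithin (0:ℝ) (Ioi 0)) (nhds 1) := by
    have h : ContinuousAt (fun ε : ℝ => (1:ℝ) + ε) 0 := by fun_prop
    have h2 := h.tendsto
    simp only [add_zero] at h2
    exact h2.mono_left nhdsWithin_le_nhds
  have h1m : Tendsto (fun ε : ℝ => (1:ℝ) - ε) (nhdsWithin (0:ℝ) (Ioi 0)) (nhds 1) := by
    have h : ContinuousAt (fun ε : ℝ => (1:ℝ) - ε) 0 := by fun_prop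
    have h2 := h.tendsto
    simp only [sub_zero] at h2
    exact h2.mono_left nhdsWithin_le_nhds
  have h2ωne : (2 : ENNReal) * ω ≠ ⊤ := ENNReal.mul_ne_top (by norm_num) hωne
  have hJp : Tendsto (fun ε : ℝ => 2 * (ω * J (1+ε))) (nhdsWithin (0:ℝ) (Ioi 0))
      (nhds (2 * ω * I)) := by
    have h := ENNReal.Tendsto.const_mul (a := 2 * ω) (hJcont.comp h1p) (Or.inr h2ωne)
    simpa [mul_assoc] using h
  have hJm : Tendsto (fun ε : ℝ => 2 * (ω * J (1-ε))) (nhdsWithin (0:ℝ) (Ioi 0))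
      (nhds (2 * ω * I)) := by
    have h := ENNReal.Tendsto.const_mul (a := 2 * ω) (hJcont.comp h1m) (Or.inr h2ωne)
    simpa [mul_assoc] using h
  have hmemIoo : Ioo (0:ℝ) 1 ∈ nhdsWithin (0:ℝ) (Ioi 0) :=
    Ioo_mem_nhdsGT_of_mem (by constructor <;> norm_num)
  have hup : limsup HH (nhdsWithin (0:ℝ) (Ioi 0)) ≤ 2 * ω * I := by
    refine ge_of_tendsto hJp ?_
    filter_upwards [hmemIoo] with ε hε
    exact hUB ε hε
  have hdown : 2 * ω * I ≤ liminf HH (nhdsWithin (0:ℝ) (Ioi 0)) := by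
    refine le_of_tendsto hJm ?_
    filter_upwards [hmemIoo] with ε hε
    exact hLB ε hε
  have hls : liminf HH (nhdsWithin (0:ℝ) (Ioi 0)) ≤ limsup HH (nhdsWithin (0:ℝ) (Ioi 0)) :=
    liminf_le_limsup
  have MAIN : Tendsto HH (nhdsWithin (0:ℝ) (Ioi 0)) (nhds (2 * ω * I)) :=
    tendsto_of_liminf_eq_limsup (le_antisymm (hls.trans hup) hdown)
      (le_antisymm hup (hdown.trans hls))
  -- transfer along Φ
  have hΦt : Tendsto Φ (nhdsWithin (0:ℝ) (Ioi 0)) (nhdsWithin (0:ℝ) (Ioi 0)) := by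
    rw [tendsto_nhdsWithin_iff]
    constructor
    · have h := (hΦc 0 self_mem_Ici).tendsto
      rw [hΦ0] at h
      exact h.mono_left (nhdsWithin_mono 0 Ioi_subset_Ici_self)
    · filter_upwards [self_mem_nhdsWithin] with t ht
      exact hpos t ht
  refine (MAIN.comp hΦt).congr fun t => ?_
  simp only [Function.comp_apply, hHHdef]
  congr 2
  ext p
  simp only [mem_setOf_eq]
  rw [hψeq _ (abs_nonneg _)]
end
end

section
/- Let Φ be a Young function satisfying the global Δ₂ condition and u ∈ L^Φ(ℝ^N). With E_t as above, one has 2ω_N ∫ Φ(|u|) ≤ sup_{t>0} Φ(t)·|E_t|_{2N} ≤ 2ω_N·Δ₂(Φ)·∫ Φ(|u|), where Δ₂(Φ) = inf{k > 0 : Φ(2t) ≤ kΦ(t) for all t > 0}. -/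
open MeasureTheory Metric Set ENNReal

private lemma aux_pow_iff {N : ℕ} (hN : N ≠ 0) {a b : ℝ} (ha : 0 ≤ a) (hb : 0 ≤ b) :
    a ^ N ≤ b ↔ a ≤ b ^ (N⁻¹ : ℝ) := by
  constructor
  · intro h
    have h2 := Real.rpow_le_rpow (pow_nonneg ha N) h (by positivity : (0:ℝ) ≤ (N:ℝ)⁻¹)
    rwa [Real.pow_rpow_inv_natCast ha hN] at h2
  · intro h
    have h2 := pow_le_pow_left₀ ha h N
    rwa [Real.rpow_inv_natCast_pow hb hN] at h2

private lemma aux_ring (b c d J : ℝ≥0∞) :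
    2 * b * (c + d) * J = 2 * b * c * J + d * (2 * b * J) := by ring

private lemma aux_eps {a b C : ℝ≥0∞} (hC : C ≠ ⊤)
    (h : ∀ η : ℝ, 0 < η → a ≤ b + ENNReal.ofReal η * C) : a ≤ b := by
  by_cases hC0 : C = 0
  · simpa [hC0] using h 1 one_pos
  refine ENNReal.le_of_forall_pos_le_add fun ε hε _ => ?_
  have hε' : (ε : ℝ≥0∞) ≠ 0 := by exact_mod_cast hε.ne'
  have hdiv0 : (ε : ℝ≥0∞) / C ≠ 0 := by
    simp [ENNReal.div_eq_zero_iff, hC, hε']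
  have hdivt : (ε : ℝ≥0∞) / C ≠ ⊤ := by
    simp [ENNReal.div_eq_top, hC0, hε']
  have hη : 0 < ((ε : ℝ≥0∞) / C).toReal := ENNReal.toReal_pos hdiv0 hdivt
  have h2 := h _ hη
  rwa [ENNReal.ofReal_toReal hdivt, ENNReal.div_mul_cancel hC0 hC] at h2

private lemma aux_monoOn {Φ : ℝ → ℝ} (hconv : ConvexOn ℝ (Ici 0) Φ) (h0 : Φ 0 = 0)
    (hnn : ∀ s, 0 ≤ s → 0 ≤ Φ s) : MonotoneOn Φ (Ici 0) := by
  rintro a (ha : (0:ℝ) ≤ a) b (hb : (0:ℝ) ≤ b) hab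
  rcases eq_or_lt_of_le hb with hb0 | hb0
  · have ha0 : a = 0 := le_antisymm (hab.trans hb0.symm.le) ha
    rw [ha0, ← hb0]
  · set θ := a / b with hθ
    have hθ0 : 0 ≤ θ := div_nonneg ha hb0.le
    have hθ1 : θ ≤ 1 := div_le_one_of_le₀ hab hb0.le
    have hcv := hconv.2 (self_mem_Ici (a := (0:ℝ))) (mem_Ici.2 hb0.le)
      (by linarith : (0:ℝ) ≤ 1 - θ) hθ0 (by ring)
    have harg : (1 - θ) • (0:ℝ) + θ • b = a := by
      simp only [smul_eq_mul, mul_zero, zero_add]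
      exact div_mul_cancel₀ a hb0.ne'
    rw [harg] at hcv
    simp only [smul_eq_mul, h0, mul_zero, zero_add] at hcv
    nlinarith [hnn b hb0.le]

private lemma aux_upper (N : ℕ) (hN : 0 < N) (Ψ : ℝ → ℝ)
    (hm : Monotone Ψ) (hnn : ∀ s, 0 ≤ Ψ s) (hΨmeas : Measurable Ψ)
    (k : ℝ) (hk : 0 < k) (hΔ : ∀ s, 0 ≤ s → Ψ (2 * s) ≤ k * Ψ s)
    (u : EuclideanSpace ℝ (Fin N) → ℝ) (hu : Measurable u)
    (t : ℝ) (ht : 0 < Ψ t) :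
    ENNReal.ofReal (Ψ t) *
      volume {p : EuclideanSpace ℝ (Fin N) × EuclideanSpace ℝ (Fin N) |
        p.1 ≠ p.2 ∧ Ψ t * dist p.1 p.2 ^ N ≤ Ψ (|u p.1 - u p.2|)} ≤
    2 * volume (ball (0 : EuclideanSpace ℝ (Fin N)) 1) * ENNReal.ofReal k *
      ∫⁻ x, ENNReal.ofReal (Ψ (|u x|)) := by
  set ω := volume (ball (0 : EuclideanSpace ℝ (Fin N)) 1) with hω
  set G : EuclideanSpace ℝ (Fin N) → ℝ := fun x => Ψ (|u x|) with hGdef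
  have hG : Measurable G := hΨmeas.comp hu.abs
  have hGnn : ∀ x, 0 ≤ G x := fun x => hnn _
  set c : EuclideanSpace ℝ (Fin N) → ℝ := fun x => k * G x / Ψ t with hcdef
  have hc0 : ∀ x, 0 ≤ c x := fun x => div_nonneg (mul_nonneg hk.le (hGnn x)) ht.le
  have hcmeas : Measurable c := (hG.const_mul k).div_const _
  set B := {p : EuclideanSpace ℝ (Fin N) × EuclideanSpace ℝ (Fin N) |
    dist p.1 p.2 ^ N ≤ c p.1} with hBdef
  have hB : MeasurableSet B :=
    measurableSet_le ((continuous_fst.dist continuous_snd).pow N).measurable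
      (hcmeas.comp measurable_fst)
  have hsub : {p : EuclideanSpace ℝ (Fin N) × EuclideanSpace ℝ (Fin N) |
      p.1 ≠ p.2 ∧ Ψ t * dist p.1 p.2 ^ N ≤ Ψ (|u p.1 - u p.2|)} ⊆ B ∪ Prod.swap ⁻¹' B := by
    rintro ⟨x, y⟩ ⟨-, hle⟩
    have hkey : Ψ (|u x - u y|) ≤ k * max (G x) (G y) := by
      have h1 : |u x - u y| ≤ 2 * max |u x| |u y| := by
        have h2 := abs_sub (u x) (u y)
        have h3 : |u x| ≤ max |u x| |u y| := le_max_left _ _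
        have h4 : |u y| ≤ max |u x| |u y| := le_max_right _ _
        linarith
      calc Ψ (|u x - u y|) ≤ Ψ (2 * max |u x| |u y|) := hm h1
        _ ≤ k * Ψ (max |u x| |u y|) :=
            hΔ _ (le_trans (abs_nonneg _) (le_max_left _ _))
        _ = k * max (G x) (G y) := by rw [hm.map_max]
    rcases le_total (G y) (G x) with h | h
    · left
      show dist x y ^ N ≤ c x
      rw [hcdef, le_div_iff₀ ht]
      rw [max_eq_left h] at hkey
      calc dist x y ^ N * Ψ t = Ψ t * dist x y ^ N := mul_comm _ _
        _ ≤ Ψ (|u x - u y|) := hle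
        _ ≤ k * G x := hkey
    · right
      show dist y x ^ N ≤ c y
      rw [hcdef, le_div_iff₀ ht]
      rw [max_eq_right h] at hkey
      calc dist y x ^ N * Ψ t = Ψ t * dist x y ^ N := by rw [dist_comm]; ring
        _ ≤ Ψ (|u x - u y|) := hle
        _ ≤ k * G y := hkey
  have hswap : volume (Prod.swap ⁻¹' B : Set (EuclideanSpace ℝ (Fin N) × EuclideanSpace ℝ (Fin N)))
      = volume B := by
    rw [Measure.volume_eq_prod]
    exact Measure.measurePreserving_swap.measure_preimage hB.nullMeasurableSet
  have hBvol : volume B = (∫⁻ x, ENNReal.ofReal (c x)) * ω := by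
    rw [Measure.volume_eq_prod, Measure.prod_apply hB]
    have hsec : ∀ x : EuclideanSpace ℝ (Fin N),
        volume (Prod.mk x ⁻¹' B) = ENNReal.ofReal (c x) * ω := by
      intro x
      have hpre : Prod.mk x ⁻¹' B = closedBall x ((c x) ^ (N⁻¹ : ℝ)) := by
        ext y
        simp only [hBdef, mem_preimage, mem_setOf_eq, mem_closedBall]
        rw [dist_comm y x]
        exact aux_pow_iff hN.ne' dist_nonneg (hc0 x)
      rw [hpre, Measure.addHaar_closedBall _ _ (Real.rpow_nonneg (hc0 x) _),
        finrank_euclideanSpace_fin, Real.rpow_inv_natCast_pow (hc0 x) hN.ne']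
    simp_rw [hsec]
    rw [lintegral_mul_const _ hcmeas.ennreal_ofReal]
  calc ENNReal.ofReal (Ψ t) * volume {p : EuclideanSpace ℝ (Fin N) × EuclideanSpace ℝ (Fin N) |
        p.1 ≠ p.2 ∧ Ψ t * dist p.1 p.2 ^ N ≤ Ψ (|u p.1 - u p.2|)}
      ≤ ENNReal.ofReal (Ψ t) * (volume B + volume (Prod.swap ⁻¹' B)) := by
        gcongr
        exact (measure_mono hsub).trans (measure_union_le _ _)
    _ = 2 * (ENNReal.ofReal (Ψ t) * volume B) := by rw [hswap]; ring
    _ = 2 * ((∫⁻ x, ENNReal.ofReal (Ψ t) * ENNReal.ofReal (c x)) * ω) := by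
        rw [hBvol, lintegral_const_mul _ hcmeas.ennreal_ofReal]; ring
    _ = 2 * ((∫⁻ x, ENNReal.ofReal (k * G x)) * ω) := by
        congr 2
        refine lintegral_congr fun x => ?_
        rw [← ENNReal.ofReal_mul ht.le]
        congr 1
        rw [hcdef]
        field_simp
    _ = 2 * ω * ENNReal.ofReal k * ∫⁻ x, ENNReal.ofReal (G x) := by
        simp_rw [fun x => ENNReal.ofReal_mul (q := G x) hk.le]
        rw [lintegral_const_mul _ hG.ennreal_ofReal]
        ring

private lemma aux_lower (N : ℕ) (hN : 0 < N) (Ψ : ℝ → ℝ)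
    (hc : Continuous Ψ) (hm : Monotone Ψ) (h0 : Ψ 0 = 0) (hnn : ∀ s, 0 ≤ Ψ s)
    (hpos : ∀ s, 0 < s → 0 < Ψ s)
    (u : EuclideanSpace ℝ (Fin N) → ℝ) (hu : Measurable u)
    (hfin : ∫⁻ x, ENNReal.ofReal (Ψ (|u x|)) < ⊤) :
    2 * volume (ball (0 : EuclideanSpace ℝ (Fin N)) 1) * ∫⁻ x, ENNReal.ofReal (Ψ (|u x|)) ≤
      ⨆ t ∈ Ioi (0:ℝ), ENNReal.ofReal (Ψ t) *
        volume {p : EuclideanSpace ℝ (Fin N) × EuclideanSpace ℝ (Fin N) |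
          p.1 ≠ p.2 ∧ Ψ t * dist p.1 p.2 ^ N ≤ Ψ (|u p.1 - u p.2|)} := by
  set ω := volume (ball (0 : EuclideanSpace ℝ (Fin N)) 1) with hω
  have hωtop : ω ≠ ⊤ := measure_ball_lt_top.ne
  set G : EuclideanSpace ℝ (Fin N) → ℝ := fun x => Ψ (|u x|) with hGdef
  have hG : Measurable G := hc.measurable.comp hu.abs
  set F : EuclideanSpace ℝ (Fin N) → ℝ≥0∞ := fun x => ENNReal.ofReal (G x) with hFdef
  have hF : Measurable F := hG.ennreal_ofReal
  set SUP := ⨆ t ∈ Ioi (0:ℝ), ENNReal.ofReal (Ψ t) *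
      volume {p : EuclideanSpace ℝ (Fin N) × EuclideanSpace ℝ (Fin N) |
        p.1 ≠ p.2 ∧ Ψ t * dist p.1 p.2 ^ N ≤ Ψ (|u p.1 - u p.2|)} with hSUPdef
  have hlevel : ∀ δ : ℝ, 0 < δ → volume {x : EuclideanSpace ℝ (Fin N) | δ < |u x|} ≠ ⊤ := by
    intro δ hδ
    have hsub : {x : EuclideanSpace ℝ (Fin N) | δ < |u x|} ⊆
        {x | ENNReal.ofReal (Ψ δ) ≤ F x} := fun x hx =>
      ENNReal.ofReal_le_ofReal (hm (le_of_lt hx))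
    have h1 : ENNReal.ofReal (Ψ δ) * volume {x : EuclideanSpace ℝ (Fin N) | δ < |u x|}
        ≤ ∫⁻ x, F x :=
      le_trans (mul_le_mul_right (measure_mono hsub) _)
        (mul_meas_ge_le_lintegral₀ hF.aemeasurable _)
    intro htop
    rw [htop, ENNReal.mul_top (by
      simp only [ne_eq, ENNReal.ofReal_eq_zero, not_le]
      exact hpos δ hδ)] at h1
    exact hfin.ne (top_le_iff.1 h1)
  have L1 : ∀ δ : ℝ, 0 < δ →
      2 * ω * (∫⁻ x in {x : EuclideanSpace ℝ (Fin N) | 2*δ < |u x|},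
        ENNReal.ofReal (Ψ (|u x| - δ))) ≤ SUP := by
    intro δ hδ
    set Sδ := {x : EuclideanSpace ℝ (Fin N) | 2*δ < |u x|} with hSδdef
    have hSδm : MeasurableSet Sδ := measurableSet_lt measurable_const hu.abs
    set Tδ := {x : EuclideanSpace ℝ (Fin N) | δ < |u x|} with hTδdef
    have hTδm : MeasurableSet Tδ := measurableSet_lt measurable_const hu.abs
    have hSfin : volume Sδ ≠ ⊤ := hlevel (2*δ) (by linarith)
    have hTfin : volume Tδ ≠ ⊤ := hlevel δ hδ
    set C := 2 * (volume Tδ * volume Sδ) with hCdef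
    have hCtop : C ≠ ⊤ :=
      ENNReal.mul_ne_top ENNReal.ofNat_ne_top (ENNReal.mul_ne_top hTfin hSfin)
    refine aux_eps hCtop ?_
    intro η hη
    obtain ⟨t, htη, ht0⟩ : ∃ t, Ψ t < η ∧ 0 < t := by
      have htd : Filter.Tendsto Ψ (nhds 0) (nhds 0) := by
        simpa [h0] using hc.tendsto 0
      have hev : ∀ᶠ s in nhds (0:ℝ), Ψ s < η :=
        htd.eventually_lt_const hη
      have hev' : ∀ᶠ s in nhdsWithin (0:ℝ) (Ioi 0), Ψ s < η :=
        hev.filter_mono nhdsWithin_le_nhds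
      exact (hev'.and (eventually_mem_nhdsWithin)).exists
    have hΨt := hpos t ht0
    set A := {p : EuclideanSpace ℝ (Fin N) × EuclideanSpace ℝ (Fin N) |
      2*δ < |u p.1| ∧ |u p.2| ≤ δ ∧ p.1 ≠ p.2 ∧ Ψ t * dist p.1 p.2 ^ N ≤ Ψ (|u p.1| - δ)}
      with hAdef
    have hAm : MeasurableSet A := by
      have : A = {p : EuclideanSpace ℝ (Fin N) × EuclideanSpace ℝ (Fin N) | 2*δ < |u p.1|}
          ∩ ({p | |u p.2| ≤ δ} ∩ ({p | p.1 = p.2}ᶜ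
          ∩ {p | Ψ t * dist p.1 p.2 ^ N ≤ Ψ (|u p.1| - δ)})) := by
        ext p; simp [hAdef, and_assoc]
      rw [this]
      refine (measurableSet_lt measurable_const ((hu.comp measurable_fst).abs)).inter
        ((measurableSet_le ((hu.comp measurable_snd).abs) measurable_const).inter
        (((isClosed_eq continuous_fst continuous_snd).measurableSet.compl).inter
        (measurableSet_le
          (((continuous_fst.dist continuous_snd).pow N).measurable.const_mul _)
          (hc.measurable.comp (((hu.comp measurable_fst).abs).sub_const δ)))))
    set St := {p : EuclideanSpace ℝ (Fin N) × EuclideanSpace ℝ (Fin N) |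
      p.1 ≠ p.2 ∧ Ψ t * dist p.1 p.2 ^ N ≤ Ψ (|u p.1 - u p.2|)} with hStdef
    have hAS : A ⊆ St := by
      rintro ⟨x, y⟩ ⟨h1, h2, h3, h4⟩
      refine ⟨h3, h4.trans (hm ?_)⟩
      have h5 : |u x| - |u y| ≤ |u x - u y| := abs_sub_abs_le_abs_sub _ _
      linarith
    have hAS' : Prod.swap ⁻¹' A ⊆ St := by
      rintro ⟨x, y⟩ hp
      simp only [Set.mem_preimage, Prod.swap_prod_mk, hAdef, mem_setOf_eq] at hp
      obtain ⟨h1, h2, h3, h4⟩ := hp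
      refine ⟨h3.symm, ?_⟩
      have h5 : |u y| - |u x| ≤ |u x - u y| := by
        rw [abs_sub_comm]; exact abs_sub_abs_le_abs_sub _ _
      calc Ψ t * dist x y ^ N = Ψ t * dist y x ^ N := by rw [dist_comm]
        _ ≤ Ψ (|u y| - δ) := h4
        _ ≤ Ψ (|u x - u y|) := hm (by linarith)
    have hswapA : volume (Prod.swap ⁻¹' A :
        Set (EuclideanSpace ℝ (Fin N) × EuclideanSpace ℝ (Fin N))) = volume A := by
      rw [Measure.volume_eq_prod]
      exact Measure.measurePreserving_swap.measure_preimage hAm.nullMeasurableSet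
    have hdisj : Disjoint A (Prod.swap ⁻¹' A) := by
      rw [Set.disjoint_left]
      rintro ⟨x, y⟩ ⟨h1, h2, -, -⟩ hp
      simp only [Set.mem_preimage, Prod.swap_prod_mk, hAdef, mem_setOf_eq] at hp
      obtain ⟨h1', h2', -, -⟩ := hp
      linarith
    have hcount : 2 * volume A ≤ volume St := by
      calc 2 * volume A = volume A + volume (Prod.swap ⁻¹' A) := by rw [hswapA]; ring
        _ = volume (A ∪ Prod.swap ⁻¹' A) :=
            (measure_union hdisj (hAm.preimage measurable_swap)).symm
        _ ≤ volume St := measure_mono (union_subset hAS hAS')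
    have hAvol : (∫⁻ x in Sδ, (ENNReal.ofReal (Ψ (|u x| - δ) / Ψ t) * ω - volume Tδ))
        ≤ volume A := by
      have hApply : volume A = ∫⁻ x, volume (Prod.mk x ⁻¹' A) := by
        rw [Measure.volume_eq_prod, Measure.prod_apply hAm]
      rw [hApply]
      refine le_trans ?_ (setLIntegral_le_lintegral Sδ _)
      refine setLIntegral_mono (measurable_measure_prodMk_left hAm) fun x hx => ?_
      set r := (Ψ (|u x| - δ) / Ψ t) ^ (N⁻¹ : ℝ) with hrdef
      have hq0 : (0:ℝ) ≤ Ψ (|u x| - δ) / Ψ t := div_nonneg (hnn _) hΨt.le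
      have hr0 : 0 ≤ r := Real.rpow_nonneg hq0 _
      have hball : closedBall x r ⊆ (Prod.mk x ⁻¹' A ∪ Tδ) ∪ {x} := by
        intro y hy
        by_cases hyT : y ∈ Tδ
        · exact Or.inl (Or.inr hyT)
        by_cases hyx : y = x
        · exact Or.inr (by simp [hyx])
        refine Or.inl (Or.inl ?_)
        have hyδ : |u y| ≤ δ := not_lt.1 hyT
        have hdN : dist x y ^ N ≤ Ψ (|u x| - δ) / Ψ t := by
          rw [aux_pow_iff hN.ne' dist_nonneg hq0, dist_comm]
          exact mem_closedBall.1 hy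
        refine ⟨hx, hyδ, fun h => hyx h.symm, ?_⟩
        calc Ψ t * dist x y ^ N ≤ Ψ t * (Ψ (|u x| - δ) / Ψ t) :=
              mul_le_mul_of_nonneg_left hdN hΨt.le
          _ = Ψ (|u x| - δ) := by field_simp
      have hvol1 : volume (closedBall x r) ≤ volume (Prod.mk x ⁻¹' A) + volume Tδ := by
        calc volume (closedBall x r) ≤ volume ((Prod.mk x ⁻¹' A ∪ Tδ) ∪ {x}) :=
              measure_mono hball
          _ ≤ volume (Prod.mk x ⁻¹' A ∪ Tδ) + volume ({x} :
              Set (EuclideanSpace ℝ (Fin N))) := measure_union_le _ _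
          _ = volume (Prod.mk x ⁻¹' A ∪ Tδ) := by
              have hsing : volume ({x} : Set (EuclideanSpace ℝ (Fin N))) = 0 := by
                have h00 : ({x} : Set (EuclideanSpace ℝ (Fin N))) = closedBall x 0 := by
                  simp
                rw [h00, Measure.addHaar_closedBall _ _ le_rfl,
                  finrank_euclideanSpace_fin, zero_pow hN.ne', ENNReal.ofReal_zero, zero_mul]
              rw [hsing, add_zero]
          _ ≤ volume (Prod.mk x ⁻¹' A) + volume Tδ := measure_union_le _ _
      have hcb : volume (closedBall x r) = ENNReal.ofReal (Ψ (|u x| - δ) / Ψ t) * ω := by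
        rw [Measure.addHaar_closedBall _ _ hr0, finrank_euclideanSpace_fin, hrdef,
          Real.rpow_inv_natCast_pow hq0 hN.ne']
      rw [← hcb]
      exact tsub_le_iff_right.2 hvol1
    have hAvol2 : ω * (∫⁻ x in Sδ, ENNReal.ofReal (Ψ (|u x| - δ) / Ψ t))
        ≤ volume A + volume Tδ * volume Sδ := by
      have hmeas1 : Measurable fun x : EuclideanSpace ℝ (Fin N) =>
          ENNReal.ofReal (Ψ (|u x| - δ) / Ψ t) :=
        ((hc.measurable.comp (hu.abs.sub_const δ)).div_const _).ennreal_ofReal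
      calc ω * ∫⁻ x in Sδ, ENNReal.ofReal (Ψ (|u x| - δ) / Ψ t)
          = ∫⁻ x in Sδ, ENNReal.ofReal (Ψ (|u x| - δ) / Ψ t) * ω := by
            rw [mul_comm]
            exact (lintegral_mul_const _ hmeas1).symm
        _ ≤ ∫⁻ x in Sδ, ((ENNReal.ofReal (Ψ (|u x| - δ) / Ψ t) * ω - volume Tδ)
            + volume Tδ) := lintegral_mono fun x => le_tsub_add
        _ = (∫⁻ x in Sδ, (ENNReal.ofReal (Ψ (|u x| - δ) / Ψ t) * ω - volume Tδ))
            + volume Tδ * volume Sδ := by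
            rw [lintegral_add_right _ measurable_const, setLIntegral_const]
        _ ≤ volume A + volume Tδ * volume Sδ := add_le_add_left hAvol _
    have h5 : ENNReal.ofReal (Ψ t) * (ω * ∫⁻ x in Sδ, ENNReal.ofReal (Ψ (|u x| - δ) / Ψ t))
        = ω * ∫⁻ x in Sδ, ENNReal.ofReal (Ψ (|u x| - δ)) := by
      rw [← mul_assoc, mul_comm (ENNReal.ofReal (Ψ t)) ω, mul_assoc]
      congr 1
      rw [← lintegral_const_mul' _ _ ENNReal.ofReal_ne_top]
      refine lintegral_congr fun x => ?_
      rw [← ENNReal.ofReal_mul hΨt.le]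
      congr 1
      field_simp
    have key : 2 * ω * (∫⁻ x in Sδ, ENNReal.ofReal (Ψ (|u x| - δ)))
        ≤ ENNReal.ofReal (Ψ t) * volume St + ENNReal.ofReal η * C := by
      calc 2 * ω * (∫⁻ x in Sδ, ENNReal.ofReal (Ψ (|u x| - δ)))
          = 2 * (ENNReal.ofReal (Ψ t)
            * (ω * ∫⁻ x in Sδ, ENNReal.ofReal (Ψ (|u x| - δ) / Ψ t))) := by rw [h5]; ring
        _ ≤ 2 * (ENNReal.ofReal (Ψ t) * (volume A + volume Tδ * volume Sδ)) := by
            gcongr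
        _ = ENNReal.ofReal (Ψ t) * (2 * volume A)
            + ENNReal.ofReal (Ψ t) * (2 * (volume Tδ * volume Sδ)) := by ring
        _ ≤ ENNReal.ofReal (Ψ t) * volume St + ENNReal.ofReal η * C := by
            rw [hCdef]
            exact add_le_add (mul_le_mul_right hcount _)
              (mul_le_mul_left (ENNReal.ofReal_le_ofReal htη.le) _)
    refine key.trans (add_le_add_left ?_ _)
    rw [hSUPdef]
    exact le_iSup₂ (f := fun (t : ℝ) (_ : t ∈ Ioi (0:ℝ)) => ENNReal.ofReal (Ψ t) *
      volume {p : EuclideanSpace ℝ (Fin N) × EuclideanSpace ℝ (Fin N) |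
        p.1 ≠ p.2 ∧ Ψ t * dist p.1 p.2 ^ N ≤ Ψ (|u p.1 - u p.2|)}) t ht0
  -- monotone convergence
  set δseq : ℕ → ℝ := fun n => 1 / (n + 1 : ℝ) with hδseq
  have hδpos : ∀ n, 0 < δseq n := fun n => by positivity
  have hδanti : ∀ n m : ℕ, n ≤ m → δseq m ≤ δseq n := by
    intro n m h
    apply one_div_le_one_div_of_le (by positivity)
    have : (n:ℝ) ≤ m := by exact_mod_cast h
    linarith
  set f : ℕ → EuclideanSpace ℝ (Fin N) → ℝ≥0∞ := fun n =>
    Set.indicator {x | 2 * δseq n < |u x|}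
      (fun x => ENNReal.ofReal (Ψ (|u x| - δseq n))) with hfdef
  have hfmeas : ∀ n, Measurable (f n) := fun n =>
    ((hc.measurable.comp (hu.abs.sub_const _)).ennreal_ofReal).indicator
      (measurableSet_lt measurable_const hu.abs)
  have hfmono : Monotone f := by
    intro n m hnm x
    simp only [hfdef, Set.indicator, mem_setOf_eq]
    split_ifs with h1 h2 h2
    · exact ENNReal.ofReal_le_ofReal (hm (by have := hδanti n m hnm; linarith))
    · exact absurd (lt_of_le_of_lt (by have := hδanti n m hnm; linarith) h1) h2
    · exact zero_le
    · exact le_rfl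
  have hflim : ∀ x, ⨆ n, f n x = F x := by
    intro x
    rcases eq_or_lt_of_le (abs_nonneg (u x)) with h | h
    · have hz : ∀ n, f n x = 0 := fun n =>
        Set.indicator_of_notMem (by simp only [mem_setOf_eq, ← h, not_lt]; positivity) _
      simp [hz, hFdef, hGdef, ← h, h0]
    · refine iSup_eq_of_tendsto (fun n m hnm => hfmono hnm x) ?_
      have hδ0 : Filter.Tendsto δseq Filter.atTop (nhds 0) :=
        tendsto_one_div_add_atTop_nhds_zero_nat
      have harg : Filter.Tendsto (fun n => |u x| - δseq n) Filter.atTop (nhds (|u x|)) := by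
        have h4 := (tendsto_const_nhds :
          Filter.Tendsto (fun _ : ℕ => |u x|) Filter.atTop (nhds (|u x|))).sub hδ0
        rwa [sub_zero] at h4
      have h1 : Filter.Tendsto (fun n => ENNReal.ofReal (Ψ (|u x| - δseq n)))
          Filter.atTop (nhds (F x)) :=
        (ENNReal.continuous_ofReal.tendsto _).comp ((hc.tendsto _).comp harg)
      have hev : ∀ᶠ n in Filter.atTop, 2 * δseq n < |u x| := by
        have h2 := hδ0.const_mul (2:ℝ)
        rw [mul_zero] at h2
        exact h2.eventually_lt_const h
      refine h1.congr' (hev.mono fun n hn => ?_)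
      have hmem : x ∈ {x : EuclideanSpace ℝ (Fin N) | 2 * δseq n < |u x|} := hn
      simp only [hfdef]
      exact (Set.indicator_of_mem hmem
        (fun x => ENNReal.ofReal (Ψ (|u x| - δseq n)))).symm
  calc 2 * ω * ∫⁻ x, F x = ⨆ n, 2 * ω * ∫⁻ x, f n x := by
        rw [← ENNReal.mul_iSup, ← lintegral_iSup hfmeas hfmono]
        congr 1
        exact (lintegral_congr hflim).symm
    _ ≤ SUP := by
        refine iSup_le fun n => ?_
        have hL := L1 (δseq n) (hδpos n)
        rwa [← lintegral_indicator (measurableSet_lt measurable_const hu.abs)] at hL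

theorem stmt2 (N : ℕ) (hN : 0 < N) (Φ : ℝ → ℝ)
    (hΦc : ContinuousOn Φ (Ici 0)) (hΦconv : ConvexOn ℝ (Ici 0) Φ)
    (hΦ0 : Φ 0 = 0) (hΦnn : ∀ s, 0 ≤ s → 0 ≤ Φ s)
    (hΔ2 : ∃ k > 0, ∀ s > (0:ℝ), Φ (2 * s) ≤ k * Φ s)
    (u : EuclideanSpace ℝ (Fin N) → ℝ) (hu : Measurable u)
    (hfin : ∫⁻ x, ENNReal.ofReal (Φ (|u x|)) < ⊤) :
    2 * volume (ball (0 : EuclideanSpace ℝ (Fin N)) 1) *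
        ∫⁻ x, ENNReal.ofReal (Φ (|u x|)) ≤
      (⨆ t ∈ Ioi (0:ℝ), ENNReal.ofReal (Φ t) *
        volume {p : EuclideanSpace ℝ (Fin N) × EuclideanSpace ℝ (Fin N) |
          p.1 ≠ p.2 ∧ Φ t * dist p.1 p.2 ^ N ≤ Φ (|u p.1 - u p.2|)}) ∧
    (⨆ t ∈ Ioi (0:ℝ), ENNReal.ofReal (Φ t) *
        volume {p : EuclideanSpace ℝ (Fin N) × EuclideanSpace ℝ (Fin N) |
          p.1 ≠ p.2 ∧ Φ t * dist p.1 p.2 ^ N ≤ Φ (|u p.1 - u p.2|)}) ≤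
      2 * volume (ball (0 : EuclideanSpace ℝ (Fin N)) 1) *
        ENNReal.ofReal (sInf {k : ℝ | 0 < k ∧ ∀ s > (0:ℝ), Φ (2 * s) ≤ k * Φ s}) *
        ∫⁻ x, ENNReal.ofReal (Φ (|u x|)) := by
  obtain ⟨k0, hk0, hΔk0⟩ := hΔ2
  set Ψ : ℝ → ℝ := fun s => Φ (max s 0) with hΨdef
  have hmonoOn := aux_monoOn hΦconv hΦ0 hΦnn
  have hΨc : Continuous Ψ :=
    hΦc.comp_continuous (continuous_id.max continuous_const)
      fun x => mem_Ici.2 (le_max_right _ _)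
  have hΨm : Monotone Ψ := fun a b hab =>
    hmonoOn (mem_Ici.2 (le_max_right a 0)) (mem_Ici.2 (le_max_right b 0))
      (max_le_max hab le_rfl)
  have hΨnn : ∀ s, 0 ≤ Ψ s := fun s => hΦnn _ (le_max_right _ _)
  have hΨ0 : Ψ 0 = 0 := by simp only [hΨdef, max_self]; exact hΦ0
  have hΨeq : ∀ s, 0 ≤ s → Ψ s = Φ s := fun s hs => by
    simp only [hΨdef]; rw [max_eq_left hs]
  have hΔΨ : ∀ k : ℝ, (∀ s > (0:ℝ), Φ (2 * s) ≤ k * Φ s) →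
      ∀ s, 0 ≤ s → Ψ (2 * s) ≤ k * Ψ s := by
    intro k hk s hs
    rcases eq_or_lt_of_le hs with h | h
    · rw [← h, mul_zero, hΨ0, mul_zero]
    · rw [hΨeq (2*s) (by positivity), hΨeq s hs]
      exact hk s h
  have hIeq : ∫⁻ x, ENNReal.ofReal (Φ (|u x|)) = ∫⁻ x, ENNReal.ofReal (Ψ (|u x|)) :=
    lintegral_congr fun x => by rw [hΨeq _ (abs_nonneg _)]
  have hSUPeq : (⨆ t ∈ Ioi (0:ℝ), ENNReal.ofReal (Φ t) *
        volume {p : EuclideanSpace ℝ (Fin N) × EuclideanSpace ℝ (Fin N) |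
          p.1 ≠ p.2 ∧ Φ t * dist p.1 p.2 ^ N ≤ Φ (|u p.1 - u p.2|)})
      = ⨆ t ∈ Ioi (0:ℝ), ENNReal.ofReal (Ψ t) *
        volume {p : EuclideanSpace ℝ (Fin N) × EuclideanSpace ℝ (Fin N) |
          p.1 ≠ p.2 ∧ Ψ t * dist p.1 p.2 ^ N ≤ Ψ (|u p.1 - u p.2|)} := by
    refine biSup_congr fun t ht => ?_
    have ht0 : (0:ℝ) < t := ht
    have hset : {p : EuclideanSpace ℝ (Fin N) × EuclideanSpace ℝ (Fin N) |
          p.1 ≠ p.2 ∧ Φ t * dist p.1 p.2 ^ N ≤ Φ (|u p.1 - u p.2|)}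
        = {p : EuclideanSpace ℝ (Fin N) × EuclideanSpace ℝ (Fin N) |
          p.1 ≠ p.2 ∧ Ψ t * dist p.1 p.2 ^ N ≤ Ψ (|u p.1 - u p.2|)} := by
      ext p
      simp only [mem_setOf_eq]
      rw [hΨeq t ht0.le, hΨeq _ (abs_nonneg _)]
    rw [hset, hΨeq t ht0.le]
  have hfin' : ∫⁻ x, ENNReal.ofReal (Ψ (|u x|)) < ⊤ := by rw [← hIeq]; exact hfin
  have hωtop : volume (ball (0 : EuclideanSpace ℝ (Fin N)) 1) ≠ ⊤ :=
    measure_ball_lt_top.ne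
  constructor
  · rw [hIeq, hSUPeq]
    by_cases hdeg : ∀ s, 0 < s → 0 < Ψ s
    · exact aux_lower N hN Ψ hΨc hΨm hΨ0 hΨnn hdeg u hu hfin'
    · push_neg at hdeg
      obtain ⟨s1, hs1, hs1'⟩ := hdeg
      have hzero1 : Ψ s1 = 0 := le_antisymm hs1' (hΨnn _)
      have claim : ∀ n : ℕ, ∀ s, 0 ≤ s → s ≤ 2^n * s1 → Ψ s = 0 := by
        intro n
        induction n with
        | zero =>
          intro s hs hle
          refine le_antisymm ?_ (hΨnn s)
          rw [← hzero1]
          exact hΨm (by simpa using hle)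
        | succ n ih =>
          intro s hs hle
          have h2 : s / 2 ≤ 2^n * s1 := by rw [pow_succ] at hle; linarith
          have h3 : Ψ (s/2) = 0 := ih (s/2) (by positivity) h2
          have h4 : Ψ (2*(s/2)) ≤ k0 * Ψ (s/2) := hΔΨ k0 hΔk0 _ (by positivity)
          rw [h3, mul_zero] at h4
          have h5 : 2*(s/2) = s := by ring
          rw [h5] at h4
          exact le_antisymm h4 (hΨnn s)
      have hzero : ∀ s, 0 ≤ s → Ψ s = 0 := by
        intro s hs
        obtain ⟨n, hn⟩ := pow_unbounded_of_one_lt (s / s1) one_lt_two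
        rw [div_lt_iff₀ hs1] at hn
        exact claim n s hs (by linarith)
      have hI0 : ∫⁻ x, ENNReal.ofReal (Ψ (|u x|)) = 0 := by
        have h6 : ∀ x : EuclideanSpace ℝ (Fin N),
            ENNReal.ofReal (Ψ (|u x|)) = (0:ℝ≥0∞) := fun x => by
          rw [hzero _ (abs_nonneg _), ENNReal.ofReal_zero]
        rw [lintegral_congr h6, lintegral_zero]
      rw [hI0, mul_zero]
      exact zero_le
  · rw [hIeq, hSUPeq]
    set K := {k : ℝ | 0 < k ∧ ∀ s > (0:ℝ), Φ (2 * s) ≤ k * Φ s} with hKdef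
    have hKne : K.Nonempty := ⟨k0, hk0, hΔk0⟩
    have hInf0 : 0 ≤ sInf K := Real.sInf_nonneg fun k hk => hk.1.le
    refine iSup₂_le fun t ht => ?_
    rcases eq_or_lt_of_le (hΨnn t) with hpos | hpos
    · rw [← hpos, ENNReal.ofReal_zero, zero_mul]
      exact zero_le
    · refine aux_eps (C := 2 * volume (ball (0 : EuclideanSpace ℝ (Fin N)) 1) *
        ∫⁻ x, ENNReal.ofReal (Ψ (|u x|))) ?_ ?_
      · exact ENNReal.mul_ne_top
          (ENNReal.mul_ne_top ENNReal.ofNat_ne_top hωtop) hfin'.ne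
      intro η hη
      obtain ⟨k, hkK, hklt⟩ := Real.lt_sInf_add_pos hKne hη
      have hb := aux_upper N hN Ψ hΨm hΨnn hΨc.measurable k hkK.1
        (hΔΨ k hkK.2) u hu t hpos
      calc ENNReal.ofReal (Ψ t) *
            volume {p : EuclideanSpace ℝ (Fin N) × EuclideanSpace ℝ (Fin N) |
              p.1 ≠ p.2 ∧ Ψ t * dist p.1 p.2 ^ N ≤ Ψ (|u p.1 - u p.2|)}
          ≤ 2 * volume (ball (0 : EuclideanSpace ℝ (Fin N)) 1) * ENNReal.ofReal k *
            ∫⁻ x, ENNReal.ofReal (Ψ (|u x|)) := hb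
        _ ≤ 2 * volume (ball (0 : EuclideanSpace ℝ (Fin N)) 1) *
            ENNReal.ofReal (sInf K + η) * ∫⁻ x, ENNReal.ofReal (Ψ (|u x|)) := by
            gcongr
        _ = (2 * volume (ball (0 : EuclideanSpace ℝ (Fin N)) 1) *
            ENNReal.ofReal (sInf K) * ∫⁻ x, ENNReal.ofReal (Ψ (|u x|)))
            + ENNReal.ofReal η * (2 * volume (ball (0 : EuclideanSpace ℝ (Fin N)) 1) *
            ∫⁻ x, ENNReal.ofReal (Ψ (|u x|))) := by
            rw [ENNReal.ofReal_add hInf0 hη.le]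
            exact aux_ring _ _ _ _
end

section
/- Let Φ be a Young function and u : ℝ^N → ℝ supported in the ball B_R of radius R. For t > 0 and x ∈ B_R, define H_{t,x} = {y ∈ ℝ^N : |y| > |x|, Φ(|u(x)-u(y)|) ≥ Φ(t)|x-y|^N} (assume Φ(t) > 0). Then ω_N·Φ(|u(x)|)/Φ(t) − ω_N R^N ≤ |H_{t,x}|_N ≤ ω_N·Φ(|u(x)|)/Φ(t) + ω_N R^N. -/
open MeasureTheory Metric Set

theorem stmt3 (N : ℕ) (hN : 0 < N) (Φ : ℝ → ℝ)
    (hΦc : ContinuousOn Φ (Ici 0)) (hΦconv : ConvexOn ℝ (Ici 0) Φ)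
    (hΦ0 : Φ 0 = 0) (hΦnn : ∀ s, 0 ≤ s → 0 ≤ Φ s)
    (R : ℝ) (hR : 0 < R)
    (u : EuclideanSpace ℝ (Fin N) → ℝ) (hu : Measurable u)
    (hsupp : ∀ x, x ∉ ball (0 : EuclideanSpace ℝ (Fin N)) R → u x = 0)
    (t : ℝ) (ht : 0 < t) (hΦt : 0 < Φ t)
    (x : EuclideanSpace ℝ (Fin N)) (hx : x ∈ ball (0 : EuclideanSpace ℝ (Fin N)) R) :
    volume (ball (0 : EuclideanSpace ℝ (Fin N)) 1) *
        ENNReal.ofReal (Φ (|u x|) / Φ t) ≤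
      volume {y : EuclideanSpace ℝ (Fin N) |
          ‖x‖ < ‖y‖ ∧ Φ t * dist x y ^ N ≤ Φ (|u x - u y|)} +
        volume (ball (0 : EuclideanSpace ℝ (Fin N)) 1) * ENNReal.ofReal (R ^ N) ∧
    volume {y : EuclideanSpace ℝ (Fin N) |
        ‖x‖ < ‖y‖ ∧ Φ t * dist x y ^ N ≤ Φ (|u x - u y|)} ≤
      volume (ball (0 : EuclideanSpace ℝ (Fin N)) 1) *
          ENNReal.ofReal (Φ (|u x|) / Φ t) +
        volume (ball (0 : EuclideanSpace ℝ (Fin N)) 1) * ENNReal.ofReal (R ^ N) := by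
  haveI : Nonempty (Fin N) := ⟨⟨0, hN⟩⟩
  have hq : 0 ≤ Φ (|u x|) / Φ t := div_nonneg (hΦnn _ (abs_nonneg _)) hΦt.le
  set q : ℝ := Φ (|u x|) / Φ t with hqdef
  set r : ℝ := q ^ ((N : ℝ)⁻¹) with hrdef
  have hr0 : 0 ≤ r := Real.rpow_nonneg hq _
  have hrN : r ^ N = q := Real.rpow_inv_natCast_pow hq hN.ne'
  have hdim : Module.finrank ℝ (EuclideanSpace ℝ (Fin N)) = N := finrank_euclideanSpace_fin
  have hcb : volume (closedBall x r)
      = volume (ball (0 : EuclideanSpace ℝ (Fin N)) 1) * ENNReal.ofReal q := by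
    rw [Measure.addHaar_closedBall _ _ hr0, hdim, hrN, mul_comm]
  have hbR : volume (ball (0 : EuclideanSpace ℝ (Fin N)) R)
      = volume (ball (0 : EuclideanSpace ℝ (Fin N)) 1) * ENNReal.ofReal (R ^ N) := by
    rw [Measure.addHaar_ball _ _ hR.le, hdim, mul_comm]
  set H := {y : EuclideanSpace ℝ (Fin N) |
      ‖x‖ < ‖y‖ ∧ Φ t * dist x y ^ N ≤ Φ (|u x - u y|)} with hHdef
  have hiff : ∀ d : ℝ, 0 ≤ d → (Φ t * d ^ N ≤ Φ (|u x|) ↔ d ≤ r) := by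
    intro d hd
    rw [← le_div_iff₀' hΦt, ← hqdef, ← hrN]
    exact pow_le_pow_iff_left₀ hd hr0 hN.ne'
  have hxR : ‖x‖ < R := mem_ball_zero_iff.mp hx
  have hsub1 : closedBall x r ⊆ H ∪ ball (0 : EuclideanSpace ℝ (Fin N)) R := by
    intro y hy
    by_cases hyR : y ∈ ball (0 : EuclideanSpace ℝ (Fin N)) R
    · exact Or.inr hyR
    · refine Or.inl ⟨lt_of_lt_of_le hxR (not_lt.mp (fun h => hyR (mem_ball_zero_iff.mpr h))), ?_⟩
      rw [hsupp y hyR, sub_zero]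
      exact (hiff (dist x y) dist_nonneg).mpr (by rwa [dist_comm, ← mem_closedBall])
  have hsub2 : H ⊆ closedBall x r ∪ ball (0 : EuclideanSpace ℝ (Fin N)) R := by
    intro y hy
    by_cases hyR : y ∈ ball (0 : EuclideanSpace ℝ (Fin N)) R
    · exact Or.inr hyR
    · refine Or.inl ?_
      rw [mem_closedBall, dist_comm]
      have h2 := hy.2
      rw [hsupp y hyR, sub_zero] at h2
      exact (hiff (dist x y) dist_nonneg).mp h2
  constructor
  · calc volume (ball (0 : EuclideanSpace ℝ (Fin N)) 1) * ENNReal.ofReal q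
        = volume (closedBall x r) := hcb.symm
      _ ≤ volume (H ∪ ball (0 : EuclideanSpace ℝ (Fin N)) R) := measure_mono hsub1
      _ ≤ volume H + volume (ball (0 : EuclideanSpace ℝ (Fin N)) R) := measure_union_le _ _
      _ = volume H + volume (ball (0 : EuclideanSpace ℝ (Fin N)) 1) * ENNReal.ofReal (R ^ N) := by
          rw [hbR]
  · calc volume H
        ≤ volume (closedBall x r ∪ ball (0 : EuclideanSpace ℝ (Fin N)) R) := measure_mono hsub2
      _ ≤ volume (closedBall x r) + volume (ball (0 : EuclideanSpace ℝ (Fin N)) R) :=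
          measure_union_le _ _
      _ = volume (ball (0 : EuclideanSpace ℝ (Fin N)) 1) * ENNReal.ofReal q
          + volume (ball (0 : EuclideanSpace ℝ (Fin N)) 1) * ENNReal.ofReal (R ^ N) := by
          rw [hcb, hbR]
end

section
/- Let Φ be a Young function and u : ℝ^N → ℝ compactly supported in B_R. With E_t = {(x,y) ∈ ℝ^{2N} : x ≠ y, Φ(|u(x)-u(y)|) ≥ Φ(t)|x-y|^N} and Φ(t) > 0, one has 2ω_N ∫ Φ(|u|) − 2Φ(t)ω_N²R^{2N} ≤ Φ(t)·|E_t|_{2N} ≤ 2ω_N ∫ Φ(|u|) + 2Φ(t)ω_N²R^{2N}. -/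
open MeasureTheory Metric Set

theorem stmt4 (N : ℕ) (hN : 0 < N) (Φ : ℝ → ℝ)
    (hΦc : ContinuousOn Φ (Ici 0)) (hΦconv : ConvexOn ℝ (Ici 0) Φ)
    (hΦ0 : Φ 0 = 0) (hΦnn : ∀ s, 0 ≤ s → 0 ≤ Φ s)
    (R : ℝ) (hR : 0 < R)
    (u : EuclideanSpace ℝ (Fin N) → ℝ) (hu : Measurable u)
    (hsupp : ∀ x, x ∉ ball (0 : EuclideanSpace ℝ (Fin N)) R → u x = 0)
    (hfin : ∫⁻ x, ENNReal.ofReal (Φ (|u x|)) < ⊤)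
    (t : ℝ) (ht : 0 < t) (hΦt : 0 < Φ t) :
    2 * volume (ball (0 : EuclideanSpace ℝ (Fin N)) 1) *
        (∫⁻ x, ENNReal.ofReal (Φ (|u x|))) ≤
      ENNReal.ofReal (Φ t) *
          volume {p : EuclideanSpace ℝ (Fin N) × EuclideanSpace ℝ (Fin N) |
            p.1 ≠ p.2 ∧ Φ t * dist p.1 p.2 ^ N ≤ Φ (|u p.1 - u p.2|)} +
        2 * ENNReal.ofReal (Φ t) *
          (volume (ball (0 : EuclideanSpace ℝ (Fin N)) 1)) ^ 2 *
          ENNReal.ofReal (R ^ (2 * N)) ∧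
    ENNReal.ofReal (Φ t) *
        volume {p : EuclideanSpace ℝ (Fin N) × EuclideanSpace ℝ (Fin N) |
          p.1 ≠ p.2 ∧ Φ t * dist p.1 p.2 ^ N ≤ Φ (|u p.1 - u p.2|)} ≤
      2 * volume (ball (0 : EuclideanSpace ℝ (Fin N)) 1) *
          (∫⁻ x, ENNReal.ofReal (Φ (|u x|))) +
        2 * ENNReal.ofReal (Φ t) *
          (volume (ball (0 : EuclideanSpace ℝ (Fin N)) 1)) ^ 2 *
          ENNReal.ofReal (R ^ (2 * N)) := by
  classical
  have hNne : N ≠ 0 := hN.ne'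
  set Ω := volume (ball (0 : EuclideanSpace ℝ (Fin N)) 1) with hΩdef
  set B := ball (0 : EuclideanSpace ℝ (Fin N)) R with hBdef
  set T := ENNReal.ofReal (Φ t) with hTdef
  set K := ENNReal.ofReal (R ^ (2 * N)) with hKdef
  set I := ∫⁻ x, ENNReal.ofReal (Φ (|u x|)) with hIdef
  set S := {p : EuclideanSpace ℝ (Fin N) × EuclideanSpace ℝ (Fin N) |
      p.1 ≠ p.2 ∧ Φ t * dist p.1 p.2 ^ N ≤ Φ (|u p.1 - u p.2|)} with hSdef
  set Φ' : ℝ → ℝ := fun s => Φ (max s 0) with hΦ'def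
  have hΦ'c : Continuous Φ' :=
    hΦc.comp_continuous (continuous_id.max continuous_const) (fun x => mem_Ici.mpr (le_max_right _ _))
  have hΦ'abs : ∀ s : ℝ, Φ (|s|) = Φ' (|s|) := fun s => by
    simp [hΦ'def, max_eq_left (abs_nonneg s)]
  have hΦ'0 : Φ' 0 = 0 := by simp [hΦ'def, hΦ0]
  have hSeq : S = {p : EuclideanSpace ℝ (Fin N) × EuclideanSpace ℝ (Fin N) |
      p.1 ≠ p.2 ∧ Φ t * dist p.1 p.2 ^ N ≤ Φ' (|u p.1 - u p.2|)} := by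
    simp only [hSdef, hΦ'abs]
  have hmf : Measurable fun p : EuclideanSpace ℝ (Fin N) × EuclideanSpace ℝ (Fin N) =>
      Φ' (|u p.1 - u p.2|) :=
    hΦ'c.measurable.comp (((hu.comp measurable_fst).sub (hu.comp measurable_snd)).abs)
  have hmg : Measurable fun p : EuclideanSpace ℝ (Fin N) × EuclideanSpace ℝ (Fin N) =>
      Φ t * dist p.1 p.2 ^ N :=
    measurable_const.mul (continuous_dist.measurable.pow_const N)
  have hSm : MeasurableSet S := by
    rw [hSeq]
    exact ((isClosed_eq continuous_fst continuous_snd).measurableSet.compl).inter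
      (measurableSet_le hmg hmf)
  set S1 := S ∩ (B ×ˢ Bᶜ) with hS1def
  set S2 := S ∩ (Bᶜ ×ˢ B) with hS2def
  have hS1m : MeasurableSet S1 :=
    hSm.inter (measurableSet_ball.prod measurableSet_ball.compl)
  have hS2m : MeasurableSet S2 :=
    hSm.inter (measurableSet_ball.compl.prod measurableSet_ball)
  -- nonnegativity
  have hfnn : ∀ x, 0 ≤ Φ' (|u x|) := fun x => (hΦ'abs (u x)) ▸ hΦnn _ (abs_nonneg _)
  have hcnn : ∀ x, 0 ≤ Φ' (|u x|) / Φ t := fun x => div_nonneg (hfnn x) hΦt.le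
  -- radius function
  set r : EuclideanSpace ℝ (Fin N) → ℝ := fun x => (Φ' (|u x|) / Φ t) ^ ((N : ℝ)⁻¹)
    with hrdef
  have hrnn : ∀ x, 0 ≤ r x := fun x => Real.rpow_nonneg (hcnn x) _
  have hrpow : ∀ x, r x ^ N = Φ' (|u x|) / Φ t := fun x =>
    Real.rpow_inv_natCast_pow (hcnn x) hNne
  -- sections of S1
  have hsec : ∀ x ∈ B, Prod.mk x ⁻¹' S1 = closedBall x (r x) \ B := by
    intro x hx
    ext y
    simp only [hS1def, hSeq, mem_preimage, mem_inter_iff, mem_setOf_eq, mem_prod,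
      mem_diff, mem_closedBall, mem_compl_iff]
    constructor
    · rintro ⟨⟨hne, hle⟩, hxB, hyB⟩
      refine ⟨?_, hyB⟩
      rw [hsupp y hyB, sub_zero] at hle
      rw [dist_comm, ← pow_le_pow_iff_left₀ dist_nonneg (hrnn x) hNne, hrpow x,
        le_div_iff₀ hΦt, mul_comm]
      exact hle
    · rintro ⟨hdy, hyB⟩
      have hne : x ≠ y := fun h => hyB (h ▸ hx)
      refine ⟨⟨hne, ?_⟩, hx, hyB⟩
      rw [hsupp y hyB, sub_zero, dist_comm x y, mul_comm]
      have h2 : dist y x ^ N ≤ r x ^ N :=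
        (pow_le_pow_iff_left₀ dist_nonneg (hrnn x) hNne).mpr hdy
      exact (le_div_iff₀ hΦt).mp (h2.trans_eq (hrpow x))
  have hsec0 : ∀ x, x ∉ B → Prod.mk x ⁻¹' S1 = ∅ := by
    intro x hx
    ext y
    simp only [hS1def, mem_preimage, mem_inter_iff, mem_prod, mem_empty_iff_false,
      iff_false]
    rintro ⟨_, hxB, _⟩
    exact hx hxB
  -- volume of closed balls
  have hcb : ∀ x, volume (closedBall x (r x)) = ENNReal.ofReal (Φ' (|u x|) / Φ t) * Ω := by
    intro x
    rw [Measure.addHaar_closedBall volume x (hrnn x), finrank_euclideanSpace_fin, hrpow x]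
  -- set g
  set g : EuclideanSpace ℝ (Fin N) → ENNReal := fun x => ENNReal.ofReal (Φ' (|u x|) / Φ t)
    with hgdef
  have hgm : Measurable g :=
    ((hΦ'c.measurable.comp hu.abs).div_const (Φ t)).ennreal_ofReal
  set J := ∫⁻ x in B, g x with hJdef
  -- volume of S1 via Fubini
  have hS1vol : volume S1 = ∫⁻ x, volume (Prod.mk x ⁻¹' S1) := by
    rw [Measure.volume_eq_prod, Measure.prod_apply hS1m]
  have hsecm : Measurable fun x => volume (Prod.mk x ⁻¹' S1) :=
    measurable_measure_prodMk_left hS1m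
  -- upper bound for vol S1
  have hupper : volume S1 ≤ J * Ω := by
    rw [hS1vol]
    calc (∫⁻ x, volume (Prod.mk x ⁻¹' S1))
        ≤ ∫⁻ x, B.indicator (fun x => g x * Ω) x := by
          apply lintegral_mono
          intro x
          show volume (Prod.mk x ⁻¹' S1) ≤ B.indicator (fun x => g x * Ω) x
          by_cases hx : x ∈ B
          · rw [hsec x hx, indicator_of_mem hx]
            exact (measure_mono diff_subset).trans_eq (hcb x)
          · rw [hsec0 x hx, indicator_of_notMem hx]
            simp
      _ = ∫⁻ x in B, g x * Ω := lintegral_indicator measurableSet_ball _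
      _ = J * Ω := lintegral_mul_const _ hgm
  -- lower bound
  have hlower : J * Ω ≤ volume S1 + volume B * volume B := by
    calc J * Ω = ∫⁻ x in B, g x * Ω := (lintegral_mul_const _ hgm).symm
      _ ≤ ∫⁻ x in B, (volume (Prod.mk x ⁻¹' S1) + volume B) := by
          refine setLIntegral_mono (hsecm.add_const _) ?_
          intro x hx
          rw [hsec x hx, ← hcb x]
          exact tsub_le_iff_right.mp le_measure_diff
      _ = (∫⁻ x in B, volume (Prod.mk x ⁻¹' S1)) + volume B * volume B := by
          rw [lintegral_add_right _ measurable_const, setLIntegral_const]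
      _ ≤ volume S1 + volume B * volume B := by
          gcongr
          rw [hS1vol]
          exact setLIntegral_le_lintegral _ _
  -- relating I and J
  have hI : I = ∫⁻ x in B, ENNReal.ofReal (Φ' (|u x|)) := by
    rw [hIdef]
    simp_rw [hΦ'abs]
    refine (setLIntegral_eq_of_support_subset ?_).symm
    intro x hx
    by_contra h
    apply hx
    simp [hsupp x h, hΦ'0]
  have hTJ : T * J = I := by
    rw [hTdef, hJdef, hgdef, ← lintegral_const_mul _ hgm, hI]
    congr 1
    ext x
    rw [← ENNReal.ofReal_mul hΦt.le]
    congr 1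
    field_simp
  -- swap symmetry
  have hswapeq : Prod.swap ⁻¹' S2 = S1 := by
    ext ⟨x, y⟩
    simp only [hS1def, hS2def, hSdef, mem_preimage, Prod.swap_prod_mk, mem_inter_iff,
      mem_setOf_eq, mem_prod, mem_compl_iff]
    constructor
    · rintro ⟨⟨hne, hle⟩, hy, hx⟩
      refine ⟨⟨Ne.symm hne, ?_⟩, hx, hy⟩
      rwa [dist_comm, abs_sub_comm] at hle
    · rintro ⟨⟨hne, hle⟩, hx, hy⟩
      refine ⟨⟨Ne.symm hne, ?_⟩, hy, hx⟩
      rwa [dist_comm, abs_sub_comm] at hle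
  have hvolS2 : volume S2 = volume S1 := by
    rw [← hswapeq, Measure.volume_eq_prod]
    have hmp : MeasurePreserving (Prod.swap :
        EuclideanSpace ℝ (Fin N) × EuclideanSpace ℝ (Fin N) →
          EuclideanSpace ℝ (Fin N) × EuclideanSpace ℝ (Fin N))
        (volume.prod volume) (volume.prod volume) := Measure.measurePreserving_swap
    rw [hmp.measure_preimage (hS2m.nullMeasurableSet)]
  -- disjointness and union bound
  have hdisj : Disjoint S1 S2 := by
    rw [Set.disjoint_left]
    rintro p ⟨_, hp1, _⟩ ⟨_, hq1, _⟩
    exact hq1 hp1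
  have hunion_le : volume S1 + volume S2 ≤ volume S := by
    rw [← measure_union hdisj hS2m]
    exact measure_mono (union_subset inter_subset_left inter_subset_left)
  -- cover
  have hcover : S ⊆ (B ×ˢ B) ∪ (S1 ∪ S2) := by
    intro p hp
    by_cases h1 : p.1 ∈ B <;> by_cases h2 : p.2 ∈ B
    · exact Or.inl ⟨h1, h2⟩
    · exact Or.inr (Or.inl ⟨hp, h1, h2⟩)
    · exact Or.inr (Or.inr ⟨hp, h1, h2⟩)
    · exfalso
      obtain ⟨hne, hle⟩ := hp
      rw [hsupp _ h1, hsupp _ h2, sub_zero, abs_zero, hΦ0] at hle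
      have hpos : 0 < Φ t * dist p.1 p.2 ^ N :=
        mul_pos hΦt (pow_pos (dist_pos.mpr hne) N)
      linarith
  have hcoverle : volume S ≤ volume B * volume B + (volume S1 + volume S2) := by
    calc volume S ≤ volume (B ×ˢ B) + volume (S1 ∪ S2) :=
          (measure_mono hcover).trans (measure_union_le _ _)
      _ ≤ volume B * volume B + (volume S1 + volume S2) := by
          gcongr
          · rw [Measure.volume_eq_prod, Measure.prod_prod]
          · exact measure_union_le _ _
  -- volume of B
  haveI : Nontrivial (EuclideanSpace ℝ (Fin N)) :=
    Module.nontrivial_of_finrank_pos (R := ℝ) (by rw [finrank_euclideanSpace_fin]; exact hN)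
  have hvolB : volume B = ENNReal.ofReal (R ^ N) * Ω := by
    rw [hBdef, Measure.addHaar_ball volume 0 hR.le, finrank_euclideanSpace_fin]
  have hBB : volume B * volume B = K * Ω ^ 2 := by
    rw [hvolB, hKdef, show 2 * N = N * 2 from Nat.mul_comm 2 N, pow_mul,
      ENNReal.ofReal_pow (pow_nonneg hR.le N)]
    ring
  constructor
  · -- lower bound for the measure of E_t
    calc 2 * Ω * I = 2 * (T * (J * Ω)) := by rw [← hTJ]; ring
      _ ≤ 2 * (T * (volume S1 + volume B * volume B)) := by gcongr
      _ = T * (volume S1 + volume S2) + 2 * T * (volume B * volume B) := by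
          rw [hvolS2]; ring
      _ ≤ T * volume S + 2 * T * (K * Ω ^ 2) := by
          rw [hBB]; gcongr
      _ = T * volume S + 2 * T * Ω ^ 2 * K := by ring
  · -- upper bound
    calc T * volume S ≤ T * (volume B * volume B + (volume S1 + volume S2)) := by gcongr
      _ = T * (volume B * volume B) + 2 * (T * volume S1) := by rw [hvolS2]; ring
      _ ≤ T * (K * Ω ^ 2) + 2 * (T * (J * Ω)) := by
          rw [hBB]; gcongr
      _ = T * (K * Ω ^ 2) + 2 * (Ω * I) := by rw [← hTJ]; ring
      _ ≤ 2 * T * Ω ^ 2 * K + 2 * Ω * I := by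
          gcongr ?_ + ?_
          · calc T * (K * Ω ^ 2) ≤ 2 * (T * (K * Ω ^ 2)) :=
                le_mul_of_one_le_left zero_le one_le_two
              _ = 2 * T * Ω ^ 2 * K := by ring
          · exact le_of_eq (by ring)
      _ = 2 * Ω * I + 2 * T * Ω ^ 2 * K := add_comm _ _
end

section
/- Let Φ be a Young function satisfying the Δ₂ condition and u ∈ L^Φ(ℝ^N). Then limsup_{t→0⁺} Φ(t)·|E_t|_{2N} ≤ 2ω_N ∫_{ℝ^N} Φ(|u(x)|) dx, where E_t = {(x,y) : x ≠ y, Φ(|u(x)-u(y)|) ≥ Φ(t)|x-y|^N}. -/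
open MeasureTheory Metric Set Filter
open scoped ENNReal

namespace Stmt11Aux

lemma slice_vol {N : ℕ} (hN : 0 < N) {c a : ℝ} (hc : 0 < c) (ha : 0 ≤ a)
    (x : EuclideanSpace ℝ (Fin N)) :
    volume {y : EuclideanSpace ℝ (Fin N) | c * dist x y ^ N ≤ a}
      = ENNReal.ofReal (a / c) * volume (ball (0 : EuclideanSpace ℝ (Fin N)) 1) := by
  set r : ℝ := (a / c) ^ ((N : ℝ)⁻¹) with hr
  have hac : 0 ≤ a / c := div_nonneg ha hc.le
  have hrnn : 0 ≤ r := Real.rpow_nonneg hac _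
  have hNne : (N : ℝ) ≠ 0 := by exact_mod_cast hN.ne'
  have hrN : r ^ N = a / c := by
    rw [hr, ← Real.rpow_natCast ((a / c) ^ ((N : ℝ)⁻¹)) N, ← Real.rpow_mul hac,
      inv_mul_cancel₀ hNne, Real.rpow_one]
  have hset : {y : EuclideanSpace ℝ (Fin N) | c * dist x y ^ N ≤ a} = closedBall x r := by
    ext y
    simp only [mem_setOf_eq, mem_closedBall, dist_comm y x]
    rw [← pow_le_pow_iff_left₀ dist_nonneg hrnn hN.ne', hrN, le_div_iff₀' hc]
  rw [hset, Measure.addHaar_closedBall _ _ hrnn, finrank_euclideanSpace_fin, hrN]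

lemma mul_slice_le {N : ℕ} (hN : 0 < N) {c a : ℝ} (hc : 0 < c) (ha : 0 ≤ a)
    (x : EuclideanSpace ℝ (Fin N)) :
    ENNReal.ofReal c * volume {y : EuclideanSpace ℝ (Fin N) | c * dist x y ^ N ≤ a}
      ≤ ENNReal.ofReal a * volume (ball (0 : EuclideanSpace ℝ (Fin N)) 1) := by
  rw [slice_vol hN hc ha x, ← mul_assoc, ENNReal.ofReal_div_of_pos hc]
  refine mul_le_mul_left ?_ _
  exact ENNReal.mul_div_le

lemma C_tendsto {N : ℕ} (hN : 0 < N) (Φ : ℝ → ℝ)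
    (hΦ0 : Φ 0 = 0)
    (hpos : ∀ t : ℝ, 0 < t → 0 < Φ t)
    (hΦt0 : Tendsto (fun t => ENNReal.ofReal (Φ t)) (nhdsWithin 0 (Ioi 0)) (nhds 0))
    (u : EuclideanSpace ℝ (Fin N) → ℝ) (hu : Measurable u)
    {b δ : ℝ} (hb : 0 < b) (hδ : 0 < δ)
    (hbm : Measurable (fun x => Φ (b * |u x|)))
    (hbnn : ∀ x, 0 ≤ Φ (b * |u x|))
    (hbfin : ∫⁻ x, ENNReal.ofReal (Φ (b * |u x|)) ≠ ⊤)
    (hlev : ∀ x : EuclideanSpace ℝ (Fin N), u x ≠ 0 →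
      volume {y : EuclideanSpace ℝ (Fin N) | δ * |u x| ≤ |u y|} ≠ ⊤) :
    Tendsto (fun t : ℝ => ENNReal.ofReal (Φ t) *
        volume {p : EuclideanSpace ℝ (Fin N) × EuclideanSpace ℝ (Fin N) |
          p.1 ≠ p.2 ∧ (Φ t * dist p.1 p.2 ^ N ≤ Φ (b * |u p.1|) ∧ δ * |u p.1| ≤ |u p.2|)})
      (nhdsWithin 0 (Ioi 0)) (nhds 0) := by
  set ω := volume (ball (0 : EuclideanSpace ℝ (Fin N)) 1) with hω
  set C : ℝ → Set (EuclideanSpace ℝ (Fin N) × EuclideanSpace ℝ (Fin N)) :=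
    fun t => {p | p.1 ≠ p.2 ∧ (Φ t * dist p.1 p.2 ^ N ≤ Φ (b * |u p.1|) ∧ δ * |u p.1| ≤ |u p.2|)}
    with hC
  have hCm : ∀ t : ℝ, MeasurableSet (C t) := by
    intro t
    have hCt : C t = {p : EuclideanSpace ℝ (Fin N) × EuclideanSpace ℝ (Fin N) | p.1 = p.2}ᶜ ∩
        ({p : EuclideanSpace ℝ (Fin N) × EuclideanSpace ℝ (Fin N) |
            Φ t * dist p.1 p.2 ^ N ≤ Φ (b * |u p.1|)} ∩
          {p : EuclideanSpace ℝ (Fin N) × EuclideanSpace ℝ (Fin N) | δ * |u p.1| ≤ |u p.2|}) := by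
      ext p; simp [hC, mem_setOf_eq, and_assoc]
    rw [hCt]
    refine MeasurableSet.inter ?_ (MeasurableSet.inter ?_ ?_)
    · exact (isClosed_eq continuous_fst continuous_snd).measurableSet.compl
    · apply measurableSet_le
      · exact (continuous_const.mul ((continuous_dist.comp
          (continuous_fst.prodMk continuous_snd)).pow N)).measurable
      · exact hbm.comp measurable_fst
    · apply measurableSet_le
      · exact (hu.comp measurable_fst).abs.const_mul δ
      · exact (hu.comp measurable_snd).abs
  set F : ℝ → EuclideanSpace ℝ (Fin N) → ℝ≥0∞ :=
    fun t x => ENNReal.ofReal (Φ t) * volume {y | (x, y) ∈ C t} with hF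
  have heq : ∀ t : ℝ, ENNReal.ofReal (Φ t) * volume (C t) = ∫⁻ x, F t x := by
    intro t
    rw [Measure.volume_eq_prod, Measure.prod_apply (hCm t),
      ← lintegral_const_mul _ (measurable_measure_prodMk_left (hCm t))]
    rfl
  have hmain : Tendsto (fun t => ∫⁻ x, F t x) (nhdsWithin 0 (Ioi 0)) (nhds 0) := by
    have h0 : (0 : ℝ≥0∞) = ∫⁻ (x : EuclideanSpace ℝ (Fin N)), 0 := by simp
    rw [h0]
    refine tendsto_lintegral_filter_of_dominated_convergence
      (fun x => ENNReal.ofReal (Φ (b * |u x|)) * ω) ?_ ?_ ?_ ?_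
    · exact Eventually.of_forall fun t =>
        (measurable_measure_prodMk_left (hCm t)).const_mul _
    · filter_upwards [self_mem_nhdsWithin] with t ht
      refine Eventually.of_forall fun x => ?_
      have hsub : {y | (x, y) ∈ C t} ⊆
          {y : EuclideanSpace ℝ (Fin N) | Φ t * dist x y ^ N ≤ Φ (b * |u x|)} :=
        fun y hy => hy.2.1
      calc F t x ≤ ENNReal.ofReal (Φ t) *
            volume {y : EuclideanSpace ℝ (Fin N) | Φ t * dist x y ^ N ≤ Φ (b * |u x|)} :=
            mul_le_mul_right (measure_mono hsub) _
        _ ≤ _ := mul_slice_le hN (hpos t ht) (hbnn x) x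
    · rw [lintegral_mul_const _ hbm.ennreal_ofReal]
      exact ENNReal.mul_ne_top hbfin measure_ball_lt_top.ne
    · refine Eventually.of_forall fun x => ?_
      by_cases hux : u x = 0
      · have hempty : ∀ t : ℝ, 0 < t → {y | (x, y) ∈ C t} = ∅ := by
          intro t ht
          ext y
          simp only [mem_setOf_eq, mem_empty_iff_false, iff_false]
          rintro ⟨hne, hle, -⟩
          have hd : 0 < dist x y := dist_pos.mpr hne
          have : Φ t * dist x y ^ N > 0 :=
            mul_pos (hpos t ht) (pow_pos hd N)
          rw [hux] at hle
          simp only [abs_zero, mul_zero, hΦ0] at hle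
          linarith
        refine Tendsto.congr' ?_ tendsto_const_nhds
        filter_upwards [self_mem_nhdsWithin] with t ht
        rw [hF]
        simp only [hempty t ht, measure_empty, mul_zero]
      · have hMne : volume {y : EuclideanSpace ℝ (Fin N) | δ * |u x| ≤ |u y|} ≠ ⊤ :=
          hlev x hux
        have hup : ∀ t : ℝ, F t x ≤ ENNReal.ofReal (Φ t) *
            volume {y : EuclideanSpace ℝ (Fin N) | δ * |u x| ≤ |u y|} := by
          intro t
          exact mul_le_mul_right (measure_mono fun y hy => hy.2.2) _
        have htend : Tendsto (fun t => ENNReal.ofReal (Φ t) *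
            volume {y : EuclideanSpace ℝ (Fin N) | δ * |u x| ≤ |u y|})
            (nhdsWithin 0 (Ioi 0)) (nhds 0) := by
          have := ENNReal.Tendsto.mul_const hΦt0 (Or.inr hMne)
          simpa using this
        exact tendsto_of_tendsto_of_tendsto_of_le_of_le tendsto_const_nhds htend
          (fun t => zero_le) hup
  refine Tendsto.congr' ?_ hmain
  filter_upwards with t
  exact (heq t).symm

lemma term_bound {N : ℕ} (hN : 0 < N) {c : ℝ} (hc : 0 < c)
    {a : EuclideanSpace ℝ (Fin N) → ℝ} (ham : Measurable a) (hann : ∀ x, 0 ≤ a x) :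
    ENNReal.ofReal c *
        volume {p : EuclideanSpace ℝ (Fin N) × EuclideanSpace ℝ (Fin N) |
          c * dist p.1 p.2 ^ N ≤ a p.1}
      ≤ volume (ball (0 : EuclideanSpace ℝ (Fin N)) 1) * ∫⁻ x, ENNReal.ofReal (a x) := by
  have hSm : MeasurableSet {p : EuclideanSpace ℝ (Fin N) × EuclideanSpace ℝ (Fin N) |
      c * dist p.1 p.2 ^ N ≤ a p.1} := by
    apply measurableSet_le
    · exact (continuous_const.mul ((continuous_dist.comp
        (continuous_fst.prodMk continuous_snd)).pow N)).measurable
    · exact ham.comp measurable_fst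
  have hvol : volume {p : EuclideanSpace ℝ (Fin N) × EuclideanSpace ℝ (Fin N) |
      c * dist p.1 p.2 ^ N ≤ a p.1}
      = ∫⁻ x, ENNReal.ofReal (a x / c) * volume (ball (0 : EuclideanSpace ℝ (Fin N)) 1) := by
    rw [Measure.volume_eq_prod, Measure.prod_apply hSm]
    congr 1
    ext x
    have : Prod.mk x ⁻¹' {p : EuclideanSpace ℝ (Fin N) × EuclideanSpace ℝ (Fin N) |
        c * dist p.1 p.2 ^ N ≤ a p.1} = {y | c * dist x y ^ N ≤ a x} := rfl
    rw [this, slice_vol hN hc (hann x) x]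
  rw [hvol]
  simp_rw [ENNReal.ofReal_div_of_pos hc, div_eq_mul_inv, mul_assoc]
  rw [lintegral_mul_const _ (ham.ennreal_ofReal)]
  rw [mul_comm (volume _), ← mul_assoc, ← mul_assoc]
  refine mul_le_mul_left ?_ _
  rw [mul_comm (ENNReal.ofReal c), mul_assoc]
  calc (∫⁻ x, ENNReal.ofReal (a x)) * (ENNReal.ofReal c * (ENNReal.ofReal c)⁻¹)
      ≤ (∫⁻ x, ENNReal.ofReal (a x)) * 1 := by
        refine mul_le_mul_right ?_ _
        exact ENNReal.mul_inv_le_one _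
    _ = _ := mul_one _


lemma term_bound_snd {N : ℕ} (hN : 0 < N) {c : ℝ} (hc : 0 < c)
    {a : EuclideanSpace ℝ (Fin N) → ℝ} (ham : Measurable a) (hann : ∀ x, 0 ≤ a x) :
    ENNReal.ofReal c *
        volume {p : EuclideanSpace ℝ (Fin N) × EuclideanSpace ℝ (Fin N) |
          c * dist p.1 p.2 ^ N ≤ a p.2}
      ≤ volume (ball (0 : EuclideanSpace ℝ (Fin N)) 1) * ∫⁻ x, ENNReal.ofReal (a x) := by
  have hSm : MeasurableSet {p : EuclideanSpace ℝ (Fin N) × EuclideanSpace ℝ (Fin N) |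
      c * dist p.1 p.2 ^ N ≤ a p.1} := by
    apply measurableSet_le
    · exact (continuous_const.mul ((continuous_dist.comp
        (continuous_fst.prodMk continuous_snd)).pow N)).measurable
    · exact ham.comp measurable_fst
  have hset : {p : EuclideanSpace ℝ (Fin N) × EuclideanSpace ℝ (Fin N) |
      c * dist p.1 p.2 ^ N ≤ a p.2} = Prod.swap ⁻¹' {p : EuclideanSpace ℝ (Fin N) ×
      EuclideanSpace ℝ (Fin N) | c * dist p.1 p.2 ^ N ≤ a p.1} := by
    ext p; simp [Set.mem_setOf_eq, dist_comm p.2 p.1]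
  have hswap : volume {p : EuclideanSpace ℝ (Fin N) × EuclideanSpace ℝ (Fin N) |
      c * dist p.1 p.2 ^ N ≤ a p.2} = volume {p : EuclideanSpace ℝ (Fin N) ×
      EuclideanSpace ℝ (Fin N) | c * dist p.1 p.2 ^ N ≤ a p.1} := by
    rw [hset, Measure.volume_eq_prod]
    exact (Measure.measurePreserving_swap).measure_preimage hSm.nullMeasurableSet
  rw [hswap]
  exact term_bound hN hc ham hann

end Stmt11Aux

open Stmt11Aux

theorem stmt11 (N : ℕ) (hN : 0 < N) (Φ : ℝ → ℝ)
    (hΦc : ContinuousOn Φ (Ici 0)) (hΦconv : ConvexOn ℝ (Ici 0) Φ)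
    (hΦ0 : Φ 0 = 0) (hΦnn : ∀ s, 0 ≤ s → 0 ≤ Φ s)
    (hΔ2 : ∃ k > 0, ∀ s > (0:ℝ), Φ (2 * s) ≤ k * Φ s)
    (u : EuclideanSpace ℝ (Fin N) → ℝ) (hu : Measurable u)
    (hfin : ∫⁻ x, ENNReal.ofReal (Φ (|u x|)) < ⊤) :
    Filter.limsup (fun t : ℝ => ENNReal.ofReal (Φ t) *
        volume {p : EuclideanSpace ℝ (Fin N) × EuclideanSpace ℝ (Fin N) |
          p.1 ≠ p.2 ∧ Φ t * dist p.1 p.2 ^ N ≤ Φ (|u p.1 - u p.2|)})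
        (nhdsWithin 0 (Ioi 0)) ≤
      2 * volume (ball (0 : EuclideanSpace ℝ (Fin N)) 1) *
        (∫⁻ x, ENNReal.ofReal (Φ (|u x|))) := by
  obtain ⟨k, hk, hΔ⟩ := hΔ2
  have hmono : ∀ s t : ℝ, 0 ≤ s → s ≤ t → Φ s ≤ Φ t := by
    intro s t hs hst
    rcases eq_or_lt_of_le (hs.trans hst) with h | ht
    · have hs0 : s = 0 := le_antisymm (hst.trans h.symm.le) hs
      rw [hs0, ← h]
    · have h1 : (0:ℝ) ≤ 1 - s / t := by
        have : s / t ≤ 1 := (div_le_one ht).mpr hst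
        linarith
      have habc := hΦconv.2 (self_mem_Ici (α := ℝ)) (mem_Ici.mpr (hs.trans hst))
        h1 (div_nonneg hs (hs.trans hst)) (by ring)
      have harg : (1 - s / t) • (0:ℝ) + (s / t) • t = s := by
        simp [smul_eq_mul, ht.ne']
      rw [harg] at habc
      refine habc.trans ?_
      rw [hΦ0]
      have h2 : (s / t) * Φ t ≤ Φ t := by
        have h3 : s / t ≤ 1 := (div_le_one ht).mpr hst
        nlinarith [hΦnn t (hs.trans hst)]
      simpa [smul_eq_mul] using h2
  by_cases hpos : ∀ t : ℝ, 0 < t → 0 < Φ t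
  case neg =>
    push_neg at hpos
    obtain ⟨a, ha, haΦ⟩ := hpos
    have haΦ0 : Φ a = 0 := le_antisymm haΦ (hΦnn a ha.le)
    have hev : ∀ᶠ t in nhdsWithin (0:ℝ) (Ioi 0), (ENNReal.ofReal (Φ t) *
        volume {p : EuclideanSpace ℝ (Fin N) × EuclideanSpace ℝ (Fin N) |
          p.1 ≠ p.2 ∧ Φ t * dist p.1 p.2 ^ N ≤ Φ (|u p.1 - u p.2|)}) = 0 := by
      filter_upwards [Ioc_mem_nhdsGT_of_mem (show (0:ℝ) ∈ Ico (0:ℝ) a by simp [ha])]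
        with t ht
      have ht0 : Φ t = 0 := le_antisymm ((hmono t a ht.1.le ht.2).trans_eq haΦ0)
        (hΦnn t ht.1.le)
      simp [ht0]
    calc Filter.limsup _ (nhdsWithin (0:ℝ) (Ioi 0))
        = Filter.limsup (fun _ : ℝ => (0:ℝ≥0∞)) (nhdsWithin (0:ℝ) (Ioi 0)) :=
          Filter.limsup_congr hev
      _ = 0 := Filter.limsup_const _
      _ ≤ _ := zero_le
  case pos =>
    set ω := volume (ball (0 : EuclideanSpace ℝ (Fin N)) 1) with hω
    have hωne : ω ≠ ⊤ := measure_ball_lt_top.ne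
    set I := ∫⁻ x, ENNReal.ofReal (Φ (|u x|)) with hI
    have hΨ : Continuous fun s : ℝ => Φ |s| :=
      hΦc.comp_continuous continuous_abs fun s => abs_nonneg s
    have hmeasc : ∀ c : ℝ, 0 ≤ c → Measurable fun x => Φ (c * |u x|) := by
      intro c hc
      have heqc : (fun x => Φ (c * |u x|)) = (fun s => Φ |s|) ∘ fun x => c * u x := by
        funext x
        simp [Function.comp, abs_mul, abs_of_nonneg hc]
      rw [heqc]
      exact hΨ.measurable.comp (hu.const_mul c)
    have hum : Measurable fun x => ENNReal.ofReal (Φ (|u x|)) := by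
      have := (hmeasc 1 zero_le_one).ennreal_ofReal
      simpa using this
    have hΔ' : ∀ s : ℝ, 0 ≤ s → Φ (2 * s) ≤ k * Φ s := by
      intro s hs
      rcases hs.eq_or_lt with h | h
      · simp [← h, hΦ0]
      · exact hΔ s h
    have hΔiter : ∀ m : ℕ, ∀ s : ℝ, 0 ≤ s → Φ ((2:ℝ) ^ m * s) ≤ k ^ m * Φ s := by
      intro m
      induction m with
      | zero => intro s hs; simp
      | succ m ih =>
        intro s hs
        have h1 : (2:ℝ) ^ (m+1) * s = 2 * ((2:ℝ) ^ m * s) := by ring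
        rw [h1]
        calc Φ (2 * ((2:ℝ) ^ m * s)) ≤ k * Φ ((2:ℝ) ^ m * s) := hΔ' _ (by positivity)
          _ ≤ k * (k ^ m * Φ s) := mul_le_mul_of_nonneg_left (ih s hs) hk.le
          _ = k ^ (m+1) * Φ s := by ring
    have hfinc : ∀ m : ℕ, ∫⁻ x, ENNReal.ofReal (Φ ((2:ℝ) ^ m * |u x|)) ≠ ⊤ := by
      intro m
      have hle : ∀ x, ENNReal.ofReal (Φ ((2:ℝ) ^ m * |u x|)) ≤
          ENNReal.ofReal (k ^ m) * ENNReal.ofReal (Φ (|u x|)) := by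
        intro x
        rw [← ENNReal.ofReal_mul (by positivity)]
        exact ENNReal.ofReal_le_ofReal (hΔiter m _ (abs_nonneg _))
      refine ne_top_of_le_ne_top ?_ (lintegral_mono hle)
      rw [lintegral_const_mul _ hum]
      exact ENNReal.mul_ne_top ENNReal.ofReal_ne_top hfin.ne
    have hlev : ∀ c : ℝ, 0 < c →
        volume {y : EuclideanSpace ℝ (Fin N) | c ≤ |u y|} ≠ ⊤ := by
      intro c hc
      have hΦcpos := hpos c hc
      have hsub : {y : EuclideanSpace ℝ (Fin N) | c ≤ |u y|} ⊆
          {y : EuclideanSpace ℝ (Fin N) |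
            ENNReal.ofReal (Φ c) ≤ ENNReal.ofReal (Φ (|u y|))} := by
        intro y hy
        exact ENNReal.ofReal_le_ofReal (hmono c _ hc.le hy)
      refine ne_top_of_le_ne_top ?_ (measure_mono hsub)
      refine ne_top_of_le_ne_top ?_
        (meas_ge_le_lintegral_div hum.aemeasurable
          (by simp [hΦcpos]) ENNReal.ofReal_ne_top)
      exact (ENNReal.div_lt_top hfin.ne (by simp [hΦcpos])).ne
    have hΦt0 : Filter.Tendsto (fun t => ENNReal.ofReal (Φ t)) (nhdsWithin 0 (Ioi 0))
        (nhds 0) := by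
      have h1 : ContinuousWithinAt Φ (Ici 0) 0 := hΦc 0 self_mem_Ici
      have h2 : Filter.Tendsto Φ (nhdsWithin 0 (Ioi 0)) (nhds 0) := by
        have := h1.tendsto
        rw [hΦ0] at this
        exact this.mono_left (nhdsWithin_mono _ Ioi_subset_Ici_self)
      have := (ENNReal.continuous_ofReal.tendsto 0).comp h2
      simpa [Function.comp_def] using this
    have key : ∀ n : ℕ, Filter.limsup (fun t : ℝ => ENNReal.ofReal (Φ t) *
        volume {p : EuclideanSpace ℝ (Fin N) × EuclideanSpace ℝ (Fin N) |
          p.1 ≠ p.2 ∧ Φ t * dist p.1 p.2 ^ N ≤ Φ (|u p.1 - u p.2|)})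
        (nhdsWithin 0 (Ioi 0)) ≤
        2 * ω * ∫⁻ x, ENNReal.ofReal (Φ ((1 + ((n:ℝ)+1)⁻¹) * |u x|)) := by
      intro n
      set δ : ℝ := ((n:ℝ)+1)⁻¹ with hδdef
      have hδ : 0 < δ := by positivity
      set m : ℕ := n + 2 with hm
      set J := ∫⁻ x, ENNReal.ofReal (Φ ((1 + δ) * |u x|)) with hJ
      set gC : ℝ → ℝ≥0∞ := fun t => ENNReal.ofReal (Φ t) *
        volume {p : EuclideanSpace ℝ (Fin N) × EuclideanSpace ℝ (Fin N) |
          p.1 ≠ p.2 ∧ (Φ t * dist p.1 p.2 ^ N ≤ Φ ((2:ℝ) ^ m * |u p.1|) ∧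
            δ * |u p.1| ≤ |u p.2|)} with hgCdef
      have hbound : ∀ t : ℝ, t ∈ Ioi (0:ℝ) →
          ENNReal.ofReal (Φ t) *
            volume {p : EuclideanSpace ℝ (Fin N) × EuclideanSpace ℝ (Fin N) |
              p.1 ≠ p.2 ∧ Φ t * dist p.1 p.2 ^ N ≤ Φ (|u p.1 - u p.2|)} ≤
            ω * J + ω * J + gC t := by
        intro t ht
        have hΦtpos := hpos t ht
        have hsub : {p : EuclideanSpace ℝ (Fin N) × EuclideanSpace ℝ (Fin N) |
              p.1 ≠ p.2 ∧ Φ t * dist p.1 p.2 ^ N ≤ Φ (|u p.1 - u p.2|)} ⊆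
            ({p : EuclideanSpace ℝ (Fin N) × EuclideanSpace ℝ (Fin N) |
              Φ t * dist p.1 p.2 ^ N ≤ Φ ((1 + δ) * |u p.1|)} ∪
            {p : EuclideanSpace ℝ (Fin N) × EuclideanSpace ℝ (Fin N) |
              Φ t * dist p.1 p.2 ^ N ≤ Φ ((1 + δ) * |u p.2|)}) ∪
            {p : EuclideanSpace ℝ (Fin N) × EuclideanSpace ℝ (Fin N) |
              p.1 ≠ p.2 ∧ (Φ t * dist p.1 p.2 ^ N ≤ Φ ((2:ℝ) ^ m * |u p.1|) ∧
                δ * |u p.1| ≤ |u p.2|)} := by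
          rintro p ⟨hne, hle⟩
          by_cases h1 : |u p.1 - u p.2| ≤ (1 + δ) * |u p.1|
          · exact Or.inl (Or.inl (hle.trans (hmono _ _ (abs_nonneg _) h1)))
          by_cases h2 : |u p.1 - u p.2| ≤ (1 + δ) * |u p.2|
          · exact Or.inl (Or.inr (hle.trans (hmono _ _ (abs_nonneg _) h2)))
          push_neg at h1 h2
          have htri : |u p.1 - u p.2| ≤ |u p.1| + |u p.2| := abs_sub _ _
          have hy : δ * |u p.1| < |u p.2| := by nlinarith
          have hx : δ * |u p.2| < |u p.1| := by nlinarith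
          have hinv : δ * ((n:ℝ)+1) = 1 := by
            rw [hδdef]; field_simp
          have h3 : |u p.2| < ((n:ℝ)+1) * |u p.1| := by
            have h5 := mul_lt_mul_of_pos_left hx (show (0:ℝ) < (n:ℝ)+1 by positivity)
            calc |u p.2| = (δ * ((n:ℝ)+1)) * |u p.2| := by rw [hinv]; ring
              _ = ((n:ℝ)+1) * (δ * |u p.2|) := by ring
              _ < ((n:ℝ)+1) * |u p.1| := h5
          have h4 : ((n:ℝ)+2) ≤ (2:ℝ) ^ m := by
            rw [hm]
            have : (n + 2 : ℕ) < 2 ^ (n + 2) := Nat.lt_two_pow_self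
            exact_mod_cast this.le
          have hd2 : |u p.1 - u p.2| ≤ (2:ℝ) ^ m * |u p.1| := by
            nlinarith [abs_nonneg (u p.1)]
          exact Or.inr ⟨hne, hle.trans (hmono _ _ (abs_nonneg _) hd2), hy.le⟩
        calc ENNReal.ofReal (Φ t) *
            volume {p : EuclideanSpace ℝ (Fin N) × EuclideanSpace ℝ (Fin N) |
              p.1 ≠ p.2 ∧ Φ t * dist p.1 p.2 ^ N ≤ Φ (|u p.1 - u p.2|)}
            ≤ ENNReal.ofReal (Φ t) *
              (volume {p : EuclideanSpace ℝ (Fin N) × EuclideanSpace ℝ (Fin N) |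
                Φ t * dist p.1 p.2 ^ N ≤ Φ ((1 + δ) * |u p.1|)} +
              volume {p : EuclideanSpace ℝ (Fin N) × EuclideanSpace ℝ (Fin N) |
                Φ t * dist p.1 p.2 ^ N ≤ Φ ((1 + δ) * |u p.2|)} +
              volume {p : EuclideanSpace ℝ (Fin N) × EuclideanSpace ℝ (Fin N) |
                p.1 ≠ p.2 ∧ (Φ t * dist p.1 p.2 ^ N ≤ Φ ((2:ℝ) ^ m * |u p.1|) ∧
                  δ * |u p.1| ≤ |u p.2|)}) := by
              refine mul_le_mul_right ?_ _
              refine (measure_mono hsub).trans ?_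
              refine (measure_union_le _ _).trans ?_
              exact add_le_add_left (measure_union_le _ _) _
          _ = ENNReal.ofReal (Φ t) *
              volume {p : EuclideanSpace ℝ (Fin N) × EuclideanSpace ℝ (Fin N) |
                Φ t * dist p.1 p.2 ^ N ≤ Φ ((1 + δ) * |u p.1|)} +
              ENNReal.ofReal (Φ t) *
              volume {p : EuclideanSpace ℝ (Fin N) × EuclideanSpace ℝ (Fin N) |
                Φ t * dist p.1 p.2 ^ N ≤ Φ ((1 + δ) * |u p.2|)} +
              gC t := by
              rw [hgCdef, mul_add, mul_add]
          _ ≤ ω * J + ω * J + gC t := by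
              refine add_le_add (add_le_add ?_ ?_) le_rfl
              · exact term_bound hN hΦtpos (hmeasc _ (by positivity))
                  (fun x => hΦnn _ (by positivity))
              · exact term_bound_snd hN hΦtpos (hmeasc _ (by positivity))
                  (fun x => hΦnn _ (by positivity))
      have hgC : Filter.Tendsto gC (nhdsWithin 0 (Ioi 0)) (nhds 0) := by
        refine C_tendsto hN Φ hΦ0 hpos hΦt0 u hu (by positivity) hδ
          (hmeasc _ (by positivity)) (fun x => hΦnn _ (by positivity)) (hfinc m) ?_
        intro x hx
        exact hlev _ (mul_pos hδ (abs_pos.mpr hx))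
      have htendsum : Filter.Tendsto (fun t => ω * J + ω * J + gC t)
          (nhdsWithin (0:ℝ) (Ioi 0)) (nhds (ω * J + ω * J + 0)) :=
        tendsto_const_nhds.add hgC
      have h1 : Filter.limsup (fun t : ℝ => ENNReal.ofReal (Φ t) *
          volume {p : EuclideanSpace ℝ (Fin N) × EuclideanSpace ℝ (Fin N) |
            p.1 ≠ p.2 ∧ Φ t * dist p.1 p.2 ^ N ≤ Φ (|u p.1 - u p.2|)})
          (nhdsWithin 0 (Ioi 0)) ≤
          Filter.limsup (fun t => ω * J + ω * J + gC t) (nhdsWithin (0:ℝ) (Ioi 0)) := by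
        refine Filter.limsup_le_limsup ?_
        filter_upwards [self_mem_nhdsWithin] with t ht using hbound t ht
      rw [htendsum.limsup_eq] at h1
      calc Filter.limsup _ _ ≤ ω * J + ω * J + 0 := h1
        _ = 2 * ω * J := by ring
    have hJm : ∀ n : ℕ, Measurable fun x =>
        ENNReal.ofReal (Φ ((1 + ((n:ℝ)+1)⁻¹) * |u x|)) :=
      fun n => (hmeasc _ (by positivity)).ennreal_ofReal
    have hfanti : Antitone fun (n : ℕ) => fun (x : EuclideanSpace ℝ (Fin N)) =>
        ENNReal.ofReal (Φ ((1 + ((n:ℝ)+1)⁻¹) * |u x|)) := by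
      intro n n' hnn x
      refine ENNReal.ofReal_le_ofReal (hmono _ _ (by positivity) ?_)
      have h1 : ((n':ℝ)+1)⁻¹ ≤ ((n:ℝ)+1)⁻¹ := by
        apply inv_anti₀ (by positivity)
        exact_mod_cast add_le_add_left (Nat.cast_le.mpr hnn) 1
      nlinarith [abs_nonneg (u x)]
    have h0fin : ∫⁻ x, ENNReal.ofReal (Φ ((1 + (((0:ℕ):ℝ)+1)⁻¹) * |u x|)) ≠ ⊤ := by
      have h2 : ∀ x : EuclideanSpace ℝ (Fin N),
          (1 + (((0:ℕ):ℝ)+1)⁻¹) * |u x| = (2:ℝ)^(1:ℕ) * |u x| := by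
        intro x; norm_num
      simp_rw [h2]
      exact hfinc 1
    have hiInf : ∀ x : EuclideanSpace ℝ (Fin N),
        ⨅ n : ℕ, ENNReal.ofReal (Φ ((1 + ((n:ℝ)+1)⁻¹) * |u x|)) =
          ENNReal.ofReal (Φ (|u x|)) := by
      intro x
      have hanti : Antitone fun n : ℕ =>
          ENNReal.ofReal (Φ ((1 + ((n:ℝ)+1)⁻¹) * |u x|)) := fun n n' h => hfanti h x
      refine tendsto_nhds_unique (tendsto_atTop_iInf hanti) ?_
      have h1 : Filter.Tendsto (fun nn : ℕ => ((nn:ℝ)+1)⁻¹) atTop (nhds 0) := by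
        have := tendsto_one_div_add_atTop_nhds_zero_nat (𝕜 := ℝ)
        simpa [one_div] using this
      have harg : Filter.Tendsto (fun nn : ℕ => (1 + ((nn:ℝ)+1)⁻¹) * |u x|) atTop
          (nhds (|u x|)) := by
        have h2 := (tendsto_const_nhds (x := (1:ℝ)) (f := atTop (α := ℕ))).add h1
        have h3 := h2.mul_const (|u x|)
        simpa using h3
      have hargw : Filter.Tendsto (fun nn : ℕ => (1 + ((nn:ℝ)+1)⁻¹) * |u x|) atTop
          (nhdsWithin (|u x|) (Ici 0)) :=
        tendsto_nhdsWithin_of_tendsto_nhds_of_eventually_within _ harg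
          (Filter.Eventually.of_forall fun nn => mem_Ici.mpr (by positivity))
      have hc : ContinuousWithinAt Φ (Ici 0) (|u x|) := hΦc _ (mem_Ici.mpr (abs_nonneg _))
      have h3 := (ENNReal.continuous_ofReal.tendsto _).comp (hc.tendsto.comp hargw)
      simpa [Function.comp_def] using h3
    have hJanti : Antitone fun n : ℕ =>
        ∫⁻ x, ENNReal.ofReal (Φ ((1 + ((n:ℝ)+1)⁻¹) * |u x|)) :=
      fun n n' h => lintegral_mono fun x => hfanti h x
    have hiInfJ : ⨅ n : ℕ, ∫⁻ x, ENNReal.ofReal (Φ ((1 + ((n:ℝ)+1)⁻¹) * |u x|)) = I := by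
      rw [← lintegral_iInf hJm hfanti h0fin, hI]
      exact lintegral_congr fun x => hiInf x
    have hJtend : Filter.Tendsto (fun n : ℕ =>
        2 * ω * ∫⁻ x, ENNReal.ofReal (Φ ((1 + ((n:ℝ)+1)⁻¹) * |u x|))) atTop
        (nhds (2 * ω * I)) := by
      have h1 : Filter.Tendsto (fun n : ℕ =>
          ∫⁻ x, ENNReal.ofReal (Φ ((1 + ((n:ℝ)+1)⁻¹) * |u x|))) atTop (nhds I) := by
        rw [← hiInfJ]
        exact tendsto_atTop_iInf hJanti
      exact ENNReal.Tendsto.const_mul h1 (Or.inr (ENNReal.mul_ne_top (by simp) hωne))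
    exact ge_of_tendsto' hJtend key
end
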